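/- arXiv:2012.11953 — 4 statements merged into one kernel-verified Lean document; each statement's English description precedes it below -/
import Mathlib

section
/- Let m ≥ 1 and let X_1, …, X_m be independent exponential random variables with finite rates r_1, …, r_m > 0. Let r = r_1 + … + r_m and suppose r_i ≤ ε·r for all i, for some ε > 0. Let X_{(D)} denote the D-th smallest value among X_1, …, X_m. Then for every integer D with 1 ≤ D ≤ 1/(2ε) and every index i: P(X_i ≤ X_{(D)}) ≤ 2D·r_i/r. -/
open MeasureTheory ProbabilityTheory

namespace Paper

/-- The law of an exponential random variable with rate `r` (junk value for `r ≤ 0`,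
packaged so that the product measure below is defined). -/
noncomputable def expLaw (r : ℝ) : Measure ℝ :=
  if h : 0 < r then expMeasure r else Measure.dirac 0

instance expLaw.instIsProbabilityMeasure (r : ℝ) : IsProbabilityMeasure (expLaw r) := by
  unfold expLaw
  split
  · exact isProbabilityMeasure_expMeasure ‹0 < r›
  · exact Measure.dirac.isProbabilityMeasure

/-- `X_{(D)}`: the `D`-th smallest value of the family `ω`. -/
noncomputable def orderStat {m : ℕ} (D : ℕ) (ω : Fin m → ℝ) : ℝ :=
  sInf {x : ℝ | D ≤ Set.ncard {i | ω i ≤ x}}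

end Paper

open Paper

section Parts
open MeasureTheory Real Set Filter

namespace OSAux

variable {M : ℕ}

/-- `rho r S = ∑_{j ∉ S} r j`. -/
noncomputable def rho (r : Fin M → ℝ) (S : Finset (Fin M)) : ℝ := ∑ j ∈ Sᶜ, r j

/-- `G r S t = ∏_{j ∈ S} (1 - exp (-(r j * t)))`. -/
noncomputable def G (r : Fin M → ℝ) (S : Finset (Fin M)) (t : ℝ) : ℝ :=
  ∏ j ∈ S, (1 - Real.exp (-(r j * t)))

noncomputable def W (r : Fin M → ℝ) (S : Finset (Fin M)) : ℝ :=
  ∫ t in Ioi (0:ℝ), Real.exp (-(rho r S * t)) * G r S t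

variable {r : Fin M → ℝ}

lemma rho_pos (hr : ∀ j, 0 < r j) {S : Finset (Fin M)} (hS : S ≠ Finset.univ) :
    0 < rho r S := by
  have hex : ∃ j, j ∉ S := by
    by_contra h
    push_neg at h
    exact hS (Finset.eq_univ_iff_forall.2 h)
  obtain ⟨j, hj⟩ := hex
  exact Finset.sum_pos' (fun k _ => (hr k).le) ⟨j, Finset.mem_compl.2 hj, hr j⟩

lemma rho_erase (hr : ∀ j, 0 < r j) {S : Finset (Fin M)} {j : Fin M} (hj : j ∈ S) :
    rho r (S.erase j) = rho r S + r j := by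
  unfold rho
  rw [Finset.compl_erase, Finset.sum_insert (by simp [hj])]
  ring

lemma G_nonneg {S : Finset (Fin M)} {t : ℝ} (hr : ∀ j, 0 < r j) (ht : 0 ≤ t) :
    0 ≤ G r S t := by
  apply Finset.prod_nonneg
  intro j _
  have : Real.exp (-(r j * t)) ≤ 1 := by
    rw [Real.exp_le_one_iff]
    nlinarith [(hr j).le]
  linarith

lemma G_le_one {S : Finset (Fin M)} {t : ℝ} (hr : ∀ j, 0 < r j) (ht : 0 ≤ t) :
    G r S t ≤ 1 := by
  apply Finset.prod_le_one
  · intro j _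
    have : Real.exp (-(r j * t)) ≤ 1 := by
      rw [Real.exp_le_one_iff]; nlinarith [(hr j).le]
    linarith
  · intro j _
    have := Real.exp_pos (-(r j * t))
    linarith

lemma continuous_G (r : Fin M → ℝ) (S : Finset (Fin M)) : Continuous (G r S) := by
  apply continuous_finset_prod
  intro j _
  continuity

lemma integrableOn_exp_mul_G (hr : ∀ j, 0 < r j) {c : ℝ} (hc : 0 < c) (S : Finset (Fin M)) :
    IntegrableOn (fun t => Real.exp (-(c * t)) * G r S t) (Ioi (0:ℝ)) := by
  have hbase : IntegrableOn (fun t => Real.exp (-c * t)) (Ioi (0:ℝ)) :=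
    exp_neg_integrableOn_Ioi 0 hc
  apply Integrable.mono hbase
  · exact ((Real.continuous_exp.comp (by continuity)).mul (continuous_G r S)).aestronglyMeasurable
  · filter_upwards [ae_restrict_mem measurableSet_Ioi] with t ht
    rw [Real.norm_eq_abs, Real.norm_eq_abs, abs_of_nonneg (Real.exp_pos _).le,
      abs_of_nonneg (mul_nonneg (Real.exp_pos _).le (G_nonneg hr (le_of_lt ht))), neg_mul]
    calc Real.exp (-(c * t)) * G r S t ≤ Real.exp (-(c * t)) * 1 := by
          exact mul_le_mul_of_nonneg_left (G_le_one hr ht.le) (Real.exp_pos _).le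
      _ = Real.exp (-(c * t)) := mul_one _

lemma W_nonneg (hr : ∀ j, 0 < r j) (S : Finset (Fin M)) : 0 ≤ W r S := by
  apply setIntegral_nonneg measurableSet_Ioi
  intro t ht
  exact mul_nonneg (Real.exp_pos _).le (G_nonneg hr (le_of_lt ht))

end OSAux

namespace OSAux2
open OSAux

variable {M : ℕ} {r : Fin M → ℝ}

lemma hasDerivAt_exp_neg (c t : ℝ) :
    HasDerivAt (fun x => Real.exp (-(c * x))) (-(c * Real.exp (-(c * t)))) t := by
  have h1 : HasDerivAt (fun x : ℝ => -(c * x)) (-c) t := by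
    exact (((hasDerivAt_id t).const_mul c).neg).congr_deriv (by ring)
  have := h1.exp
  convert this using 1
  ring

lemma hasDerivAt_G (r : Fin M → ℝ) (S : Finset (Fin M)) (t : ℝ) :
    HasDerivAt (G r S)
      (∑ j ∈ S, (∏ k ∈ S.erase j, (1 - Real.exp (-(r k * t)))) * (r j * Real.exp (-(r j * t)))) t := by
  have h : ∀ j ∈ S, HasDerivAt (fun x => 1 - Real.exp (-(r j * x)))
      (r j * Real.exp (-(r j * t))) t := by
    intro j _
    have := (hasDerivAt_const t (1:ℝ)).sub (hasDerivAt_exp_neg (r j) t)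
    refine this.congr_deriv (Eq.symm ?_)
    ring
  have := HasDerivAt.fun_finsetProd h
  have h2 : HasDerivAt (fun x => ∏ k ∈ S, (1 - Real.exp (-(r k * x))))
      (∑ j ∈ S, (∏ k ∈ S.erase j, (1 - Real.exp (-(r k * t)))) * (r j * Real.exp (-(r j * t)))) t := by
    simpa [G, smul_eq_mul] using this
  exact h2

lemma main_ftc (hr : ∀ j, 0 < r j) {S : Finset (Fin M)} (hSu : S ≠ Finset.univ) :
    -(rho r S * W r S) + ∑ j ∈ S, r j * W r (S.erase j) = -(G r S 0) := by
  set ρ := rho r S with hρdef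
  have hρ : 0 < ρ := rho_pos hr hSu
  set f : ℝ → ℝ := fun t => Real.exp (-(ρ * t)) * G r S t with hf
  set f' : ℝ → ℝ := fun x => -(ρ * (Real.exp (-(ρ * x)) * G r S x)) +
      ∑ j ∈ S, r j * (Real.exp (-(rho r (S.erase j) * x)) * G r (S.erase j) x) with hf'
  have hderiv : ∀ x ∈ Ici (0:ℝ), HasDerivAt f (f' x) x := by
    intro x _
    have h1 := (hasDerivAt_exp_neg ρ x).mul (hasDerivAt_G r S x)
    refine h1.congr_deriv (Eq.symm ?_)
    rw [hf']
    simp only []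
    rw [Finset.mul_sum]
    have hsum : ∀ j ∈ S, r j * (Real.exp (-(rho r (S.erase j) * x)) * G r (S.erase j) x)
        = Real.exp (-(ρ * x)) * ((∏ k ∈ S.erase j, (1 - Real.exp (-(r k * x)))) *
            (r j * Real.exp (-(r j * x)))) := by
      intro j hj
      rw [rho_erase hr hj, ← hρdef]
      have : Real.exp (-((ρ + r j) * x)) = Real.exp (-(ρ * x)) * Real.exp (-(r j * x)) := by
        rw [← Real.exp_add]; ring_nf
      rw [this]
      unfold G
      ring
    rw [Finset.sum_congr rfl hsum]
    ring
  have hint1 : IntegrableOn (fun x => ρ * (Real.exp (-(ρ * x)) * G r S x)) (Ioi (0:ℝ)) :=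
    (integrableOn_exp_mul_G hr hρ S).const_mul ρ
  have hintj : ∀ j ∈ S, IntegrableOn
      (fun x => r j * (Real.exp (-(rho r (S.erase j) * x)) * G r (S.erase j) x)) (Ioi (0:ℝ)) := by
    intro j hj
    have : 0 < rho r (S.erase j) := by
      rw [rho_erase hr hj]; exact add_pos hρ (hr j)
    exact (integrableOn_exp_mul_G hr this (S.erase j)).const_mul (r j)
  have hint2 : IntegrableOn
      (fun x => ∑ j ∈ S, r j * (Real.exp (-(rho r (S.erase j) * x)) * G r (S.erase j) x))
      (Ioi (0:ℝ)) := by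
    apply integrable_finset_sum _ hintj
  have hint : IntegrableOn f' (Ioi (0:ℝ)) := by
    rw [hf']
    exact hint1.neg.add hint2
  have htend : Tendsto f atTop (nhds 0) := by
    have hexp : Tendsto (fun t : ℝ => Real.exp (-(ρ * t))) atTop (nhds 0) := by
      apply Real.tendsto_exp_atBot.comp
      exact Filter.tendsto_neg_atTop_atBot.comp (Filter.Tendsto.const_mul_atTop hρ tendsto_id)
    apply squeeze_zero' (g := fun t : ℝ => Real.exp (-(ρ * t)))
    · filter_upwards [Filter.eventually_ge_atTop (0:ℝ)] with t ht
      exact mul_nonneg (Real.exp_pos _).le (G_nonneg hr ht)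
    · filter_upwards [Filter.eventually_ge_atTop (0:ℝ)] with t ht
      calc Real.exp (-(ρ * t)) * G r S t ≤ Real.exp (-(ρ * t)) * 1 :=
            mul_le_mul_of_nonneg_left (G_le_one hr ht) (Real.exp_pos _).le
        _ = Real.exp (-(ρ * t)) := mul_one _
    · exact hexp
  have hbase := integral_Ioi_of_hasDerivAt_of_tendsto' hderiv hint htend
  have hzero : f 0 = G r S 0 := by simp [hf]
  rw [hzero] at hbase
  have hsplit : ∫ x in Ioi (0:ℝ), f' x
      = -(ρ * W r S) + ∑ j ∈ S, r j * W r (S.erase j) := by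
    have hint1' : IntegrableOn (fun x => -(ρ * (Real.exp (-(ρ * x)) * G r S x))) (Ioi (0:ℝ)) :=
      hint1.neg
    rw [hf']
    show (∫ x in Ioi (0:ℝ), (-(ρ * (Real.exp (-(ρ * x)) * G r S x)) +
        ∑ j ∈ S, r j * (Real.exp (-(rho r (S.erase j) * x)) * G r (S.erase j) x))) = _
    rw [integral_add hint1' hint2, integral_neg, integral_finset_sum _ hintj]
    unfold W
    congr 1
    · rw [integral_const_mul]
    · apply Finset.sum_congr rfl
      intro j _
      rw [integral_const_mul]
  rw [hsplit] at hbase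
  rw [hbase]
  ring

lemma rhoW_empty (hr : ∀ j, 0 < r j) (hu : (∅ : Finset (Fin M)) ≠ Finset.univ) :
    rho r ∅ * W r ∅ = 1 := by
  have := main_ftc hr hu
  simp only [Finset.sum_empty, add_zero, G] at this
  simp only [Finset.prod_empty] at this
  linarith

lemma rhoW_step (hr : ∀ j, 0 < r j) {S : Finset (Fin M)} (hne : S.Nonempty)
    (hSu : S ≠ Finset.univ) :
    rho r S * W r S = ∑ j ∈ S, r j * W r (S.erase j) := by
  have h := main_ftc hr hSu
  have hG0 : G r S 0 = 0 := by
    obtain ⟨j, hj⟩ := hne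
    exact Finset.prod_eq_zero hj (by simp)
  rw [hG0] at h
  linarith

lemma sum_rhoW_le (hr : ∀ j, 0 < r j) {U : Finset (Fin M)} (hU : U ≠ Finset.univ) :
    ∀ k : ℕ, ∑ S ∈ Finset.powersetCard k U, rho r S * W r S ≤ 1 := by
  have hne_univ : ∀ {S : Finset (Fin M)}, S ⊆ U → S ≠ Finset.univ := by
    intro S hSU hSu
    exact hU (Finset.univ_subset_iff.1 (hSu ▸ hSU))
  intro k
  induction k with
  | zero =>
      rw [Finset.powersetCard_zero, Finset.sum_singleton]
      rw [rhoW_empty hr (hne_univ (Finset.empty_subset U))]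
  | succ k ih =>
      have hstep : ∑ S ∈ Finset.powersetCard (k+1) U, rho r S * W r S
          = ∑ S ∈ Finset.powersetCard (k+1) U, ∑ j ∈ S, r j * W r (S.erase j) := by
        apply Finset.sum_congr rfl
        intro S hS
        rw [Finset.mem_powersetCard] at hS
        apply rhoW_step hr _ (hne_univ hS.1)
        rw [← Finset.card_pos, hS.2]
        omega
      have hre : ∑ S ∈ Finset.powersetCard (k+1) U, ∑ j ∈ S, r j * W r (S.erase j)
          = ∑ S' ∈ Finset.powersetCard k U, ∑ j ∈ U \ S', r j * W r S' := by
        rw [Finset.sum_sigma', Finset.sum_sigma']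
        apply Finset.sum_nbij' (i := fun p => (⟨p.1.erase p.2, p.2⟩ : (_ : Finset (Fin M)) × Fin M))
          (j := fun p => (⟨insert p.2 p.1, p.2⟩ : (_ : Finset (Fin M)) × Fin M))
        · intro p hp
          rw [Finset.mem_sigma] at hp ⊢
          obtain ⟨h1, h2⟩ := hp
          rw [Finset.mem_powersetCard] at h1
          constructor
          · rw [Finset.mem_powersetCard]
            constructor
            · exact (Finset.erase_subset _ _).trans h1.1
            · rw [Finset.card_erase_of_mem h2, h1.2]
              omega
          · rw [Finset.mem_sdiff]
            exact ⟨h1.1 h2, Finset.notMem_erase _ _⟩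
        · intro p hp
          rw [Finset.mem_sigma] at hp ⊢
          obtain ⟨h1, h2⟩ := hp
          rw [Finset.mem_powersetCard] at h1
          rw [Finset.mem_sdiff] at h2
          constructor
          · rw [Finset.mem_powersetCard]
            constructor
            · exact Finset.insert_subset h2.1 h1.1
            · rw [Finset.card_insert_of_notMem h2.2, h1.2]
          · exact Finset.mem_insert_self _ _
        · intro p hp
          rw [Finset.mem_sigma] at hp
          have := hp.2
          ext : 1
          · simp [Finset.insert_erase this]
          · rfl
        · intro p hp
          rw [Finset.mem_sigma] at hp
          rw [Finset.mem_sdiff] at hp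
          ext : 1
          · simp [Finset.erase_insert hp.2.2]
          · rfl
        · intro p hp
          rfl
      have hbound : ∑ S' ∈ Finset.powersetCard k U, ∑ j ∈ U \ S', r j * W r S'
          ≤ ∑ S' ∈ Finset.powersetCard k U, rho r S' * W r S' := by
        apply Finset.sum_le_sum
        intro S' hS'
        rw [← Finset.sum_mul]
        apply mul_le_mul_of_nonneg_right _ (W_nonneg hr S')
        apply Finset.sum_le_sum_of_subset_of_nonneg
        · intro j hj
          rw [Finset.mem_sdiff] at hj
          exact Finset.mem_compl.2 hj.2
        · intro j _ _
          exact (hr j).le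
      rw [hstep, hre]
      exact hbound.trans ih

end OSAux2

end Parts
section Part2
open MeasureTheory Real Set Filter ProbabilityTheory OSAux OSAux2
open scoped ENNReal

namespace OSMeasure

lemma expMeasure_Iic {s : ℝ} (hs : 0 < s) (t : ℝ) :
    expMeasure s (Iic t) = ENNReal.ofReal (if 0 ≤ t then 1 - Real.exp (-(s * t)) else 0) := by
  rw [expMeasure, gammaMeasure, withDensity_apply _ measurableSet_Iic]
  exact lintegral_exponentialPDF_eq_antiDeriv hs t

lemma expMeasure_singleton {s : ℝ} (t : ℝ) : expMeasure s {t} = 0 := by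
  rw [expMeasure, gammaMeasure, withDensity_apply _ (measurableSet_singleton t)]
  exact setLIntegral_measure_zero _ _ (Real.volume_singleton)

lemma expMeasure_Iio {s : ℝ} (hs : 0 < s) (t : ℝ) :
    expMeasure s (Iio t) = ENNReal.ofReal (if 0 ≤ t then 1 - Real.exp (-(s * t)) else 0) := by
  have : Iio t = Iic t \ {t} := by ext x; simp [lt_iff_le_and_ne]
  rw [this, measure_diff_null (expMeasure_singleton t), expMeasure_Iic hs]

lemma expMeasure_Ici {s : ℝ} (hs : 0 < s) {t : ℝ} (ht : 0 < t) :
    expMeasure s (Ici t) = ENNReal.ofReal (Real.exp (-(s * t))) := by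
  have hP : IsProbabilityMeasure (expMeasure s) := isProbabilityMeasure_expMeasure hs
  have : Ici t = (Iio t)ᶜ := by simp
  rw [this, measure_compl measurableSet_Iio (measure_ne_top _ _), measure_univ,
    expMeasure_Iio hs, if_pos ht.le]
  have hle : Real.exp (-(s * t)) ≤ 1 := by
    rw [Real.exp_le_one_iff]; nlinarith
  rw [show (1 : ℝ≥0∞) = ENNReal.ofReal 1 by simp,
    ← ENNReal.ofReal_sub _ (by nlinarith [Real.exp_pos (-(s * t))])]
  norm_num

lemma expMeasure_Iic_zero {s : ℝ} (hs : 0 < s) : expMeasure s (Iic 0) = 0 := by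
  rw [expMeasure_Iic hs]
  simp

variable {n : ℕ}

/-- The event `{∀ j ∈ S, X_j < X_i} ∩ {∀ j ∉ S ∪ {i}, X_i ≤ X_j}`. -/
def event (i : Fin (n+1)) (S : Finset (Fin (n+1))) : Set (Fin (n+1) → ℝ) :=
  {ω | ∀ j, (j ∈ S → ω j < ω i) ∧ (j ∉ S → j ≠ i → ω i ≤ ω j)}

lemma measurableSet_event (i : Fin (n+1)) (S : Finset (Fin (n+1))) :
    MeasurableSet (event i S) := by
  have h : event i S = ⋂ j, ({ω : Fin (n+1) → ℝ | j ∈ S → ω j < ω i}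
      ∩ {ω | j ∉ S → j ≠ i → ω i ≤ ω j}) := by
    ext ω
    constructor
    · intro h
      simp only [Set.mem_iInter, Set.mem_inter_iff]
      exact fun j => ⟨(h j).1, (h j).2⟩
    · intro h j
      simp only [Set.mem_iInter, Set.mem_inter_iff] at h
      exact ⟨(h j).1, (h j).2⟩
  rw [h]
  apply MeasurableSet.iInter
  intro j
  apply MeasurableSet.inter
  · by_cases hj : j ∈ S
    · have : {ω : Fin (n+1) → ℝ | j ∈ S → ω j < ω i} = {ω | ω j < ω i} := by
        ext ω; simp [hj]
      rw [this]
      exact measurableSet_lt (measurable_pi_apply j) (measurable_pi_apply i)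
    · have : {ω : Fin (n+1) → ℝ | j ∈ S → ω j < ω i} = Set.univ := by
        ext ω; simp [hj]
      rw [this]; exact MeasurableSet.univ
  · by_cases hj : j ∉ S ∧ j ≠ i
    · have : {ω : Fin (n+1) → ℝ | j ∉ S → j ≠ i → ω i ≤ ω j} = {ω | ω i ≤ ω j} := by
        ext ω; simp [hj.1, hj.2]
      rw [this]
      exact measurableSet_le (measurable_pi_apply i) (measurable_pi_apply j)
    · push_neg at hj
      by_cases hj1 : j ∉ S
      · have : {ω : Fin (n+1) → ℝ | j ∉ S → j ≠ i → ω i ≤ ω j} = Set.univ := by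
          ext ω; simp [hj1, hj hj1]
        rw [this]; exact MeasurableSet.univ
      · have : {ω : Fin (n+1) → ℝ | j ∉ S → j ≠ i → ω i ≤ ω j} = Set.univ := by
          ext ω; simp [hj1]
        rw [this]; exact MeasurableSet.univ

lemma prod_succAbove {β : Type*} [CommMonoid β] (i : Fin (n+1)) (f : Fin (n+1) → β) :
    ∏ j : Fin n, f (i.succAbove j) = ∏ j ∈ Finset.univ.erase i, f j := by
  apply Finset.prod_bij (i := fun j' _ => i.succAbove j')
  · intro a _
    exact Finset.mem_erase.2 ⟨Fin.succAbove_ne i a, Finset.mem_univ _⟩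
  · intro a _ b _ hab
    exact Fin.succAbove_right_injective hab
  · intro b hb
    obtain ⟨a, ha⟩ := Fin.exists_succAbove_eq (Finset.mem_erase.1 hb).1
    exact ⟨a, Finset.mem_univ a, ha⟩
  · intro a _
    rfl

lemma measure_event {r : Fin (n+1) → ℝ} (hr : ∀ j, 0 < r j) (i : Fin (n+1))
    (S : Finset (Fin (n+1))) (hiS : i ∉ S) :
    (Measure.pi fun j => expLaw (r j)) (event i S) = ENNReal.ofReal (r i * W r S) := by
  have hκ : (fun j => expLaw (r j)) = fun j => expMeasure (r j) := by
    funext j; exact dif_pos (hr j)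
  have hSu : S ≠ Finset.univ := fun h => hiS (h ▸ Finset.mem_univ i)
  have hρ : 0 < rho r S := rho_pos hr hSu
  rw [hκ]
  set κ : Fin (n+1) → Measure ℝ := fun j => expMeasure (r j) with hκdef
  haveI : ∀ j, IsProbabilityMeasure (κ j) := fun j => isProbabilityMeasure_expMeasure (hr j)
  have hmp := (measurePreserving_piFinSuccAbove κ i).symm
  have hA : MeasurableSet (event i S) := measurableSet_event i S
  have h1 : Measure.pi κ (event i S)
      = ((κ i).prod (Measure.pi fun j => κ (i.succAbove j)))
          ((MeasurableEquiv.piFinSuccAbove (fun _ => ℝ) i).symm ⁻¹' (event i S)) :=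
    (hmp.measure_preimage hA.nullMeasurableSet).symm
  have hpre : (MeasurableEquiv.piFinSuccAbove (fun _ : Fin (n+1) => ℝ) i).symm ⁻¹' (event i S)
      = {p : ℝ × (Fin n → ℝ) |
          ∀ j, p.2 j ∈ (if i.succAbove j ∈ S then Iio p.1 else Ici p.1)} := by
    ext ⟨t, y⟩
    simp only [Set.mem_preimage, MeasurableEquiv.piFinSuccAbove_symm_apply,
      Fin.insertNthEquiv, Equiv.coe_fn_mk, event, Set.mem_setOf_eq]
    constructor
    · intro h j
      have hne := Fin.succAbove_ne i j
      by_cases hjS : i.succAbove j ∈ S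
      · rw [if_pos hjS]
        have := (h (i.succAbove j)).1 hjS
        rwa [Fin.insertNth_apply_succAbove, Fin.insertNth_apply_same, Set.mem_Iio] at *
      · rw [if_neg hjS]
        have := (h (i.succAbove j)).2 hjS hne
        rwa [Fin.insertNth_apply_succAbove, Fin.insertNth_apply_same, Set.mem_Ici] at *
    · intro h j
      constructor
      · intro hjS
        have hji : j ≠ i := fun e => hiS (e ▸ hjS)
        obtain ⟨j', rfl⟩ := Fin.exists_succAbove_eq hji
        have := h j'
        rw [if_pos hjS, Set.mem_Iio] at this
        rwa [Fin.insertNth_apply_succAbove, Fin.insertNth_apply_same]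
      · intro hjS hji
        obtain ⟨j', rfl⟩ := Fin.exists_succAbove_eq hji
        have := h j'
        rw [if_neg hjS, Set.mem_Ici] at this
        rwa [Fin.insertNth_apply_succAbove, Fin.insertNth_apply_same]
  have hmeas2 : MeasurableSet {p : ℝ × (Fin n → ℝ) |
      ∀ j, p.2 j ∈ (if i.succAbove j ∈ S then Iio p.1 else Ici p.1)} := by
    have h : {p : ℝ × (Fin n → ℝ) |
        ∀ j, p.2 j ∈ (if i.succAbove j ∈ S then Iio p.1 else Ici p.1)}
        = ⋂ j, {p : ℝ × (Fin n → ℝ) |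
            p.2 j ∈ (if i.succAbove j ∈ S then Iio p.1 else Ici p.1)} := by
      ext p; simp only [Set.mem_setOf_eq, Set.mem_iInter]
    rw [h]
    apply MeasurableSet.iInter
    intro j
    by_cases hjS : i.succAbove j ∈ S
    · simp only [if_pos hjS, Set.mem_Iio]
      exact measurableSet_lt (measurable_snd.eval) measurable_fst
    · simp only [if_neg hjS, Set.mem_Ici]
      exact measurableSet_le measurable_fst (measurable_snd.eval)
  rw [h1, hpre, Measure.prod_apply hmeas2]
  have hslice : ∀ t : ℝ, (Prod.mk t ⁻¹' {p : ℝ × (Fin n → ℝ) |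
      ∀ j, p.2 j ∈ (if i.succAbove j ∈ S then Iio p.1 else Ici p.1)})
      = Set.pi Set.univ (fun j => if i.succAbove j ∈ S then Iio t else Ici t) := by
    intro t
    ext y
    simp only [Set.mem_preimage, Set.mem_setOf_eq, Set.mem_pi, Set.mem_univ, forall_true_left]
  -- the real-valued integrand
  have hT : S ⊆ Finset.univ.erase i := fun j hj =>
    Finset.mem_erase.2 ⟨fun e => hiS (e ▸ hj), Finset.mem_univ j⟩
  have hcompl : Sᶜ = insert i (Finset.univ.erase i \ S) := by
    ext j
    simp only [Finset.mem_compl, Finset.mem_insert, Finset.mem_sdiff, Finset.mem_erase,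
      Finset.mem_univ, and_true, true_and]
    constructor
    · intro hj
      by_cases hji : j = i
      · exact Or.inl hji
      · exact Or.inr ⟨hji, hj⟩
    · rintro (rfl | ⟨_, hj⟩)
      · exact hiS
      · exact hj
  have hrhosplit : rho r S = r i + ∑ l ∈ Finset.univ.erase i \ S, r l := by
    rw [rho, hcompl, Finset.sum_insert (by simp)]
  have hprod : ∀ t ∈ Ioi (0:ℝ),
      (Measure.pi fun j => κ (i.succAbove j))
        (Set.pi Set.univ (fun j => if i.succAbove j ∈ S then Iio t else Ici t))
      = ENNReal.ofReal (G r S t * ∏ l ∈ Finset.univ.erase i \ S, Real.exp (-(r l * t))) := by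
    intro t ht
    rw [Measure.pi_pi]
    have hfac : ∀ j : Fin n, κ (i.succAbove j) (if i.succAbove j ∈ S then Iio t else Ici t)
        = ENNReal.ofReal (if i.succAbove j ∈ S then 1 - Real.exp (-(r (i.succAbove j) * t))
            else Real.exp (-(r (i.succAbove j) * t))) := by
      intro j
      by_cases hjS : i.succAbove j ∈ S
      · rw [if_pos hjS, if_pos hjS, hκdef, expMeasure_Iio (hr _), if_pos (le_of_lt ht)]
      · rw [if_neg hjS, if_neg hjS, hκdef, expMeasure_Ici (hr _) ht]
    rw [Finset.prod_congr rfl (fun j _ => hfac j)]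
    rw [← ENNReal.ofReal_prod_of_nonneg]
    · congr 1
      rw [prod_succAbove i (fun j => if j ∈ S then 1 - Real.exp (-(r j * t))
        else Real.exp (-(r j * t)))]
      rw [← Finset.prod_sdiff hT, mul_comm]
      congr 1
      · unfold G
        apply Finset.prod_congr rfl
        intro j hj
        rw [if_pos hj]
      · apply Finset.prod_congr rfl
        intro j hj
        rw [if_neg (Finset.mem_sdiff.1 hj).2]
    · intro j _
      by_cases hjS : i.succAbove j ∈ S
      · rw [if_pos hjS]
        have : Real.exp (-(r (i.succAbove j) * t)) ≤ 1 := by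
          rw [Real.exp_le_one_iff]
          nlinarith [(hr (i.succAbove j)).le, le_of_lt (Set.mem_Ioi.1 ht)]
        linarith
      · rw [if_neg hjS]
        exact (Real.exp_pos _).le
  -- pointwise identity of real integrands
  have hptwise : ∀ t : ℝ,
      r i * Real.exp (-(r i * t)) * (G r S t * ∏ l ∈ Finset.univ.erase i \ S,
        Real.exp (-(r l * t)))
      = r i * (Real.exp (-(rho r S * t)) * G r S t) := by
    intro t
    have : ∏ l ∈ Finset.univ.erase i \ S, Real.exp (-(r l * t))
        = Real.exp (∑ l ∈ Finset.univ.erase i \ S, -(r l * t)) := (Real.exp_sum _ _).symm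
    rw [this]
    have harg : -(r i * t) + ∑ l ∈ Finset.univ.erase i \ S, -(r l * t) = -(rho r S * t) := by
      have h2 : ∑ l ∈ Finset.univ.erase i \ S, -(r l * t)
          = -(∑ l ∈ Finset.univ.erase i \ S, r l * t) := by
        rw [Finset.sum_neg_distrib]
      rw [h2, ← Finset.sum_mul, hrhosplit]
      ring
    calc r i * Real.exp (-(r i * t)) * (G r S t * Real.exp (∑ l ∈ Finset.univ.erase i \ S, -(r l * t)))
        = r i * (Real.exp (-(r i * t) + ∑ l ∈ Finset.univ.erase i \ S, -(r l * t)) * G r S t) := by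
          rw [Real.exp_add]; ring
      _ = r i * (Real.exp (-(rho r S * t)) * G r S t) := by rw [harg]
  -- now compute the lintegral
  have hae : ∀ᵐ t ∂(κ i), t ∈ Ioi (0:ℝ) := by
    rw [ae_iff]
    have : {t : ℝ | ¬ t ∈ Ioi (0:ℝ)} = Iic 0 := by ext t; simp [not_lt]
    rw [this, hκdef]
    exact expMeasure_Iic_zero (hr i)
  have hcongr : ∫⁻ t, (Measure.pi fun j => κ (i.succAbove j))
        (Prod.mk t ⁻¹' {p : ℝ × (Fin n → ℝ) |
          ∀ j, p.2 j ∈ (if i.succAbove j ∈ S then Iio p.1 else Ici p.1)}) ∂(κ i)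
      = ∫⁻ t, ENNReal.ofReal (G r S t * ∏ l ∈ Finset.univ.erase i \ S,
          Real.exp (-(r l * t))) ∂(κ i) := by
    apply lintegral_congr_ae
    filter_upwards [hae] with t ht
    rw [hslice t, hprod t ht]
  rw [hcongr]
  -- unfold the density
  have hκi : κ i = volume.withDensity (exponentialPDF (r i)) := rfl
  have hmeasg : Measurable (fun t => ENNReal.ofReal (G r S t * ∏ l ∈ Finset.univ.erase i \ S,
      Real.exp (-(r l * t)))) := by
    apply Measurable.ennreal_ofReal
    apply Continuous.measurable
    exact ((continuous_G r S).mul (continuous_finset_prod _ (fun l _ => by continuity)))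
  have hpdf : Measurable (exponentialPDF (r i)) :=
    (measurable_exponentialPDFReal (r i)).ennreal_ofReal
  rw [hκi, lintegral_withDensity_eq_lintegral_mul _ hpdf hmeasg]
  simp only [Pi.mul_apply]
  have haevol : (fun t => exponentialPDF (r i) t * ENNReal.ofReal (G r S t
        * ∏ l ∈ Finset.univ.erase i \ S, Real.exp (-(r l * t))))
      =ᵐ[volume] (Ioi (0:ℝ)).indicator
        (fun t => ENNReal.ofReal (r i * (Real.exp (-(rho r S * t)) * G r S t))) := by
    have hvol : (volume : Measure ℝ) {(0:ℝ)} = 0 := Real.volume_singleton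
    filter_upwards [compl_mem_ae_iff.2 hvol] with t ht
    simp only [Set.mem_compl_iff, Set.mem_singleton_iff] at ht
    rcases lt_trichotomy t 0 with h | h | h
    · rw [exponentialPDF_of_neg h, Set.indicator_of_notMem (by simp [not_lt, h.le]), zero_mul]
    · exact absurd h ht
    · rw [exponentialPDF_of_nonneg h.le, Set.indicator_of_mem (Set.mem_Ioi.2 h),
        ← ENNReal.ofReal_mul (mul_nonneg (hr i).le (Real.exp_pos _).le), ← hptwise t]
  rw [lintegral_congr_ae haevol, lintegral_indicator measurableSet_Ioi]
  have hint : IntegrableOn (fun t => r i * (Real.exp (-(rho r S * t)) * G r S t)) (Ioi (0:ℝ)) :=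
    (integrableOn_exp_mul_G hr hρ S).const_mul (r i)
  rw [← ofReal_integral_eq_lintegral_ofReal hint]
  · rw [MeasureTheory.integral_const_mul]
    rfl
  · filter_upwards [ae_restrict_mem measurableSet_Ioi] with t ht
    exact mul_nonneg (hr i).le (mul_nonneg (Real.exp_pos _).le (G_nonneg hr (le_of_lt ht)))

end OSMeasure
end Part2

section Part3
open MeasureTheory Real Set Filter ProbabilityTheory OSAux OSAux2 OSMeasure
open scoped ENNReal

lemma orderStat_filter_card_lt {n : ℕ} {D : ℕ} (hD : 1 ≤ D) (i : Fin (n+1))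
    (ω : Fin (n+1) → ℝ) (h : ω i ≤ orderStat D ω) :
    (Finset.univ.filter (fun j => ω j < ω i)).card < D := by
  by_contra hcard
  push_neg at hcard
  set F := Finset.univ.filter (fun j => ω j < ω i) with hF
  have hFne : F.Nonempty := by
    rw [← Finset.card_pos]
    omega
  set x := F.sup' hFne ω with hx
  have hxlt : x < ω i := by
    rw [hx, Finset.sup'_lt_iff]
    intro j hj
    exact (Finset.mem_filter.1 hj).2
  have hmem : x ∈ {y : ℝ | D ≤ Set.ncard {j | ω j ≤ y}} := by
    rw [Set.mem_setOf_eq]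
    calc (D : ℕ) ≤ F.card := hcard
      _ = (↑F : Set (Fin (n+1))).ncard := (Set.ncard_coe_finset F).symm
      _ ≤ Set.ncard {j | ω j ≤ x} := by
          apply Set.ncard_le_ncard _ (Set.toFinite _)
          intro j hj
          rw [Finset.mem_coe] at hj
          exact Finset.le_sup' ω hj
  have hbdd : BddBelow {y : ℝ | D ≤ Set.ncard {j | ω j ≤ y}} := by
    refine ⟨Finset.univ.inf' ⟨i, Finset.mem_univ i⟩ ω, ?_⟩
    intro y hy
    rw [Set.mem_setOf_eq] at hy
    have hne : {j | ω j ≤ y}.Nonempty := by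
      apply Set.nonempty_of_ncard_ne_zero
      omega
    obtain ⟨j, hj⟩ := hne
    exact le_trans (Finset.inf'_le ω (Finset.mem_univ j)) hj
  have : orderStat D ω ≤ x := csInf_le hbdd hmem
  have : ω i ≤ x := le_trans h this
  linarith

lemma orderStat_cover {n : ℕ} {D : ℕ} (hD : 1 ≤ D) (i : Fin (n+1)) :
    {ω : Fin (n+1) → ℝ | ω i ≤ orderStat D ω} ⊆
      ⋃ S ∈ ((Finset.range D).biUnion
        (fun k => Finset.powersetCard k (Finset.univ.erase i))), event i S := by
  intro ω hω
  rw [Set.mem_setOf_eq] at hω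
  set F := Finset.univ.filter (fun j => ω j < ω i) with hF
  have hcard : F.card < D := orderStat_filter_card_lt hD i ω hω
  have hsub : F ⊆ Finset.univ.erase i := by
    intro j hj
    rw [Finset.mem_erase]
    refine ⟨fun e => ?_, Finset.mem_univ j⟩
    have := (Finset.mem_filter.1 hj).2
    rw [e] at this
    exact lt_irrefl _ this
  have hmemF : F ∈ (Finset.range D).biUnion
      (fun k => Finset.powersetCard k (Finset.univ.erase i)) := by
    rw [Finset.mem_biUnion]
    exact ⟨F.card, Finset.mem_range.2 hcard, Finset.mem_powersetCard.2 ⟨hsub, rfl⟩⟩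
  refine Set.mem_iUnion.2 ⟨F, Set.mem_iUnion.2 ⟨hmemF, ?_⟩⟩
  intro j
  constructor
  · intro hj
    exact (Finset.mem_filter.1 hj).2
  · intro hj _
    by_contra hlt
    push_neg at hlt
    exact hj (Finset.mem_filter.2 ⟨Finset.mem_univ j, hlt⟩)

end Part3

open MeasureTheory Real Set Filter ProbabilityTheory OSAux OSAux2 OSMeasure in
open scoped ENNReal in
/-- **Lemma 11 (order statistics of exponentials).**  If `X_1, …, X_m` are independent
exponentials with rates `r_i`, `r = Σ r_i`, `r_i ≤ εr` for all `i`, and `1 ≤ D ≤ 1/(2ε)`,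
then `P(X_i ≤ X_{(D)}) ≤ 2D r_i / r`. -/
theorem exponential_order_statistic (m : ℕ) (hm : 1 ≤ m) (r : Fin m → ℝ)
    (hr : ∀ i, 0 < r i) (ε : ℝ) (hε : 0 < ε)
    (hmax : ∀ i, r i ≤ ε * ∑ j, r j)
    (D : ℕ) (hD1 : 1 ≤ D) (hD2 : (D : ℝ) ≤ 1 / (2 * ε)) (i : Fin m) :
    (Measure.pi fun j => expLaw (r j)) {ω | ω i ≤ orderStat D ω}
      ≤ ENNReal.ofReal (2 * D * r i / ∑ j, r j) := by
  classical
  obtain ⟨n, rfl⟩ : ∃ n, m = n + 1 := ⟨m - 1, by omega⟩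
  set μ := Measure.pi fun j => Paper.expLaw (r j) with hμ
  set R : ℝ := ∑ j, r j with hRdef
  have hR : 0 < R := Finset.sum_pos (fun j _ => hr j) ⟨i, Finset.mem_univ i⟩
  have hDε : (D : ℝ) * ε ≤ 1 / 2 := by
    rw [le_div_iff₀ (by positivity)] at hD2
    linarith
  have hU : Finset.univ.erase i ≠ (Finset.univ : Finset (Fin (n+1))) := by
    intro h
    have := h ▸ Finset.mem_univ i
    exact (Finset.mem_erase.1 this).1 rfl
  -- step 1: covering and union bound
  have h1 : μ {ω | ω i ≤ orderStat D ω}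
      ≤ ∑ k ∈ Finset.range D, ∑ S ∈ Finset.powersetCard k (Finset.univ.erase i),
          μ (OSMeasure.event i S) := by
    calc μ {ω | ω i ≤ orderStat D ω}
        ≤ μ (⋃ S ∈ ((Finset.range D).biUnion
            (fun k => Finset.powersetCard k (Finset.univ.erase i))), OSMeasure.event i S) :=
          measure_mono (orderStat_cover hD1 i)
      _ ≤ ∑ S ∈ (Finset.range D).biUnion
            (fun k => Finset.powersetCard k (Finset.univ.erase i)), μ (OSMeasure.event i S) :=
          measure_biUnion_finset_le _ _
      _ = ∑ k ∈ Finset.range D, ∑ S ∈ Finset.powersetCard k (Finset.univ.erase i),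
            μ (OSMeasure.event i S) := by
          apply Finset.sum_biUnion
          intro k hk l hl hkl
          apply Finset.disjoint_left.2
          intro S hSk hSl
          rw [Finset.mem_powersetCard] at hSk hSl
          exact hkl (hSk.2 ▸ hSl.2 ▸ rfl)
  -- step 2: each term
  have h2 : ∀ k ∈ Finset.range D, ∀ S ∈ Finset.powersetCard k (Finset.univ.erase i),
      μ (OSMeasure.event i S) ≤ ENNReal.ofReal ((2 * r i / R) * (rho r S * W r S)) := by
    intro k hk S hS
    rw [Finset.mem_powersetCard] at hS
    rw [Finset.mem_range] at hk
    have hiS : i ∉ S := fun h => (Finset.mem_erase.1 (hS.1 h)).1 rfl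
    rw [hμ, OSMeasure.measure_event hr i S hiS]
    apply ENNReal.ofReal_le_ofReal
    -- r i * W ≤ (2 r i / R) * (rho * W), since rho ≥ R / 2
    have hrho : R / 2 ≤ rho r S := by
      have hsum : ∑ j ∈ S, r j + ∑ j ∈ Sᶜ, r j = R := Finset.sum_add_sum_compl S r
      have hcard : (S.card : ℝ) ≤ (D : ℝ) - 1 := by
        have : S.card ≤ D - 1 := by omega
        have h' : (S.card : ℝ) ≤ ((D - 1 : ℕ) : ℝ) := Nat.cast_le.2 this
        rwa [Nat.cast_sub hD1, Nat.cast_one] at h'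
      have hSsum : ∑ j ∈ S, r j ≤ (S.card : ℝ) * (ε * R) := by
        calc ∑ j ∈ S, r j ≤ ∑ _j ∈ S, ε * R := Finset.sum_le_sum (fun j _ => hmax j)
          _ = (S.card : ℝ) * (ε * R) := by rw [Finset.sum_const, nsmul_eq_mul]
      have hεR : 0 ≤ ε * R := by positivity
      have : ∑ j ∈ S, r j ≤ ((D : ℝ) - 1) * (ε * R) :=
        le_trans hSsum (mul_le_mul_of_nonneg_right hcard hεR)
      have hρeq : rho r S = R - ∑ j ∈ S, r j := by rw [rho]; linarith
      rw [hρeq]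
      nlinarith
    have hW := W_nonneg hr S
    have hρpos : 0 < rho r S := lt_of_lt_of_le (by positivity) hrho
    rw [← mul_assoc]
    apply mul_le_mul_of_nonneg_right _ hW
    rw [div_mul_eq_mul_div, le_div_iff₀ hR]
    nlinarith [(hr i).le]
  -- step 3: sum the bounds
  have h3 : ∀ k ∈ Finset.range D,
      ∑ S ∈ Finset.powersetCard k (Finset.univ.erase i), μ (OSMeasure.event i S)
        ≤ ENNReal.ofReal (2 * r i / R) := by
    intro k hk
    calc ∑ S ∈ Finset.powersetCard k (Finset.univ.erase i), μ (OSMeasure.event i S)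
        ≤ ∑ S ∈ Finset.powersetCard k (Finset.univ.erase i),
            ENNReal.ofReal ((2 * r i / R) * (rho r S * W r S)) :=
          Finset.sum_le_sum (h2 k hk)
      _ = ENNReal.ofReal (∑ S ∈ Finset.powersetCard k (Finset.univ.erase i),
            (2 * r i / R) * (rho r S * W r S)) := by
          rw [ENNReal.ofReal_sum_of_nonneg]
          intro S hS
          have hSu : S ≠ Finset.univ := by
            intro h
            rw [Finset.mem_powersetCard] at hS
            have := hS.1 (h ▸ Finset.mem_univ i)
            exact (Finset.mem_erase.1 this).1 rfl
          have hρ' := rho_pos hr hSu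
          have hW' := W_nonneg hr S
          have hri : (0:ℝ) ≤ 2 * r i / R := div_nonneg (by nlinarith [(hr i).le]) hR.le
          exact mul_nonneg hri (mul_nonneg hρ'.le hW')
      _ ≤ ENNReal.ofReal (2 * r i / R) := by
          apply ENNReal.ofReal_le_ofReal
          rw [← Finset.mul_sum]
          calc (2 * r i / R) * ∑ S ∈ Finset.powersetCard k (Finset.univ.erase i),
                rho r S * W r S
              ≤ (2 * r i / R) * 1 := by
                apply mul_le_mul_of_nonneg_left (sum_rhoW_le hr hU k)
                  (div_nonneg (by nlinarith [(hr i).le]) hR.le)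
            _ = 2 * r i / R := mul_one _
  -- final computation
  calc μ {ω | ω i ≤ orderStat D ω}
      ≤ ∑ k ∈ Finset.range D, ∑ S ∈ Finset.powersetCard k (Finset.univ.erase i),
          μ (OSMeasure.event i S) := h1
    _ ≤ ∑ _k ∈ Finset.range D, ENNReal.ofReal (2 * r i / R) := Finset.sum_le_sum h3
    _ = D • ENNReal.ofReal (2 * r i / R) := by
        rw [Finset.sum_const, Finset.card_range]
    _ = (D : ℝ≥0∞) * ENNReal.ofReal (2 * r i / R) := nsmul_eq_mul _ _
    _ = ENNReal.ofReal ((D : ℝ) * (2 * r i / R)) := by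
        rw [ENNReal.ofReal_mul (by positivity), ENNReal.ofReal_natCast]
    _ = ENNReal.ofReal (2 * D * r i / R) := by
        congr 1
        ring
end

section
/- Let I and J be finite sets, A any set, τ : I × J → A a function, and a = (a_1, …, a_ℓ) ∈ A^ℓ a sequence with ℓ ≥ 1. Suppose there is a linear order on I such that for every j ∈ J there exists a nondecreasing map φ_j : I → {1, …, ℓ} with τ(i,j) = a_{φ_j(i)} for all i ∈ I (i.e., reading i ∈ I in increasing order, the values τ(i,j) form a subsequence of a, with repetitions in consecutive blocks). Let π_I and π_J be finite nonnegative measures (weight functions) on I and J respectively. Then there exist subsets S ⊆ I and T ⊆ J with π_I(S) ≥ π_I(I)/ℓ and π_J(T) ≥ π_J(J)/ℓ such that τ is constant on S × T. -/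
open Finset

/-- **Lemma 13 (a matrix lemma).**  Suppose `τ : I × J → A` and, for some sequence
`a = (a_1, …, a_ℓ)`, the map `i ↦ τ(i,j)` respects `a` for every `j` (with respect to a
fixed linear order on `I`).  Then for any finite nonnegative weight measures on `I` and
`J` there are sets `S ⊆ I`, `T ⊆ J` carrying at least a `1/ℓ` fraction of each total
weight, on which `τ` is constant. -/
theorem lemma_matrix (I J : Type*) [Fintype I] [Fintype J] [LinearOrder I]
    (A : Type*) (τ : I → J → A) (ℓ : ℕ) (hℓ : 1 ≤ ℓ) (a : Fin ℓ → A)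
    (hrespect : ∀ j : J, ∃ φ : I → Fin ℓ, Monotone φ ∧ ∀ i, τ i j = a (φ i))
    (wI : I → ℝ) (wJ : J → ℝ) (hwI : ∀ i, 0 ≤ wI i) (hwJ : ∀ j, 0 ≤ wJ j) :
    ∃ (S : Finset I) (T : Finset J) (a0 : A),
      (∑ i, wI i) / ℓ ≤ ∑ i ∈ S, wI i ∧
      (∑ j, wJ j) / ℓ ≤ ∑ j ∈ T, wJ j ∧
      ∀ i ∈ S, ∀ j ∈ T, τ i j = a0 := by
  classical
  choose φ hmono hval using hrespect
  set W := ∑ i, wI i with hWdef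
  have hW0 : 0 ≤ W := Finset.sum_nonneg fun i _ => hwI i
  have hℓ0 : (0:ℝ) < (ℓ:ℝ) := by exact_mod_cast Nat.lt_of_lt_of_le Nat.zero_lt_one hℓ
  -- cumulative weights
  set G : I → ℝ := fun i => ∑ i' ∈ univ.filter (fun i' => i' ≤ i), wI i' with hGdef
  set L : I → ℝ := fun i => ∑ i' ∈ univ.filter (fun i' => i' < i), wI i' with hLdef
  set F : J → Fin ℓ → ℝ :=
    fun j k => ∑ i ∈ univ.filter (fun i => φ j i ≤ k), wI i with hFdef
  set B : Fin ℓ → ℝ := fun k => (((k:ℕ):ℝ) + 1) * W / ℓ with hBdef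
  -- sub-lemma 1 : prefix sets {G ≤ c} have weight ≤ c
  have lemA : ∀ c : ℝ, 0 ≤ c → ∑ i ∈ univ.filter (fun i => G i ≤ c), wI i ≤ c := by
    intro c hc
    by_cases hD : (univ.filter (fun i => G i ≤ c)).Nonempty
    · set m := (univ.filter (fun i => G i ≤ c)).max' hD with hm
      have hmm : G m ≤ c := (mem_filter.mp ((univ.filter (fun i => G i ≤ c)).max'_mem hD)).2
      have hsub : univ.filter (fun i => G i ≤ c) ⊆ univ.filter (fun i => i ≤ m) := by
        intro i hi
        simp only [mem_filter, mem_univ, true_and]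
        exact le_max' _ i hi
      calc ∑ i ∈ univ.filter (fun i => G i ≤ c), wI i
          ≤ ∑ i ∈ univ.filter (fun i => i ≤ m), wI i :=
            Finset.sum_le_sum_of_subset_of_nonneg hsub (fun i _ _ => hwI i)
        _ = G m := rfl
        _ ≤ c := hmm
    · rw [Finset.not_nonempty_iff_eq_empty] at hD
      rw [hD]; simpa using hc
  -- sub-lemma 2 : upper sets {c ≤ L} have weight ≤ W - c
  have lemB : ∀ c : ℝ, c ≤ W → ∑ i ∈ univ.filter (fun i => c ≤ L i), wI i ≤ W - c := by
    intro c hc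
    by_cases hU : (univ.filter (fun i => c ≤ L i)).Nonempty
    · set m := (univ.filter (fun i => c ≤ L i)).min' hU with hm
      have hmm : c ≤ L m := (mem_filter.mp ((univ.filter (fun i => c ≤ L i)).min'_mem hU)).2
      have hsub : univ.filter (fun i => c ≤ L i) ⊆ univ.filter (fun i => ¬ i < m) := by
        intro i hi
        simp only [mem_filter, mem_univ, true_and, not_lt]
        exact min'_le _ i hi
      have hsplit : L m + ∑ i ∈ univ.filter (fun i => ¬ i < m), wI i = W := by
        rw [hLdef, hWdef]
        exact Finset.sum_filter_add_sum_filter_not univ (fun i => i < m) wI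
      calc ∑ i ∈ univ.filter (fun i => c ≤ L i), wI i
          ≤ ∑ i ∈ univ.filter (fun i => ¬ i < m), wI i :=
            Finset.sum_le_sum_of_subset_of_nonneg hsub (fun i _ _ => hwI i)
        _ = W - L m := by linarith
        _ ≤ W - c := by linarith
    · rw [Finset.not_nonempty_iff_eq_empty] at hU
      rw [hU]; simpa using sub_nonneg.mpr hc
  -- the critical index for each column
  have hKne : ∀ j, (univ.filter (fun k : Fin ℓ => B k ≤ F j k)).Nonempty := by
    intro j
    refine ⟨⟨ℓ - 1, by omega⟩, ?_⟩
    simp only [mem_filter, mem_univ, true_and]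
    have h1 : univ.filter (fun i => φ j i ≤ (⟨ℓ - 1, by omega⟩ : Fin ℓ)) = univ := by
      apply Finset.filter_true_of_mem
      intro i _
      have := (φ j i).isLt
      rw [Fin.le_def]
      simp only []
      omega
    have h2 : F j ⟨ℓ - 1, by omega⟩ = W := by rw [hFdef]; simp only []; rw [h1]
    have h3 : B ⟨ℓ - 1, by omega⟩ = W := by
      rw [hBdef]
      simp only []
      have : (((ℓ - 1 : ℕ)):ℝ) + 1 = (ℓ:ℝ) := by
        have := Nat.cast_sub hℓ (R := ℝ); push_cast [this]; ring
      rw [this]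
      field_simp
    rw [h2, h3]
  set kf : J → Fin ℓ := fun j => (univ.filter (fun k : Fin ℓ => B k ≤ F j k)).min' (hKne j)
    with hkf
  have hkf_mem : ∀ j, B (kf j) ≤ F j (kf j) := by
    intro j
    have := (univ.filter (fun k : Fin ℓ => B k ≤ F j k)).min'_mem (hKne j)
    exact (mem_filter.mp this).2
  have hkf_min : ∀ j (k : Fin ℓ), k < kf j → F j k < B k := by
    intro j k hk
    by_contra h
    push_neg at h
    have : kf j ≤ k := min'_le _ k (by simp only [mem_filter, mem_univ, true_and]; exact h)
    exact absurd hk (not_lt.mpr this)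
  -- pigeonhole over columns
  have hfib : ∑ k : Fin ℓ, ∑ j ∈ univ.filter (fun j => kf j = k), wJ j = ∑ j, wJ j := by
    exact Finset.sum_fiberwise univ kf wJ
  have hpig : ∃ k : Fin ℓ, (∑ j, wJ j) / ℓ ≤ ∑ j ∈ univ.filter (fun j => kf j = k), wJ j := by
    by_contra h
    push_neg at h
    have hne : (univ : Finset (Fin ℓ)).Nonempty := ⟨⟨0, by omega⟩, mem_univ _⟩
    have hlt := Finset.sum_lt_sum_of_nonempty hne (fun k _ => h k)
    rw [hfib] at hlt
    have : ∑ _k : Fin ℓ, (∑ j, wJ j) / ℓ = (∑ j, wJ j) := by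
      rw [Finset.sum_const, card_univ, Fintype.card_fin, nsmul_eq_mul]
      field_simp
    rw [this] at hlt
    exact lt_irrefl _ hlt
  obtain ⟨k, hk⟩ := hpig
  -- bounds on k
  have hkcast : ((k:ℕ):ℝ) + 1 ≤ (ℓ:ℝ) := by exact_mod_cast k.isLt
  have hkW : B k ≤ W := by
    rw [hBdef]
    rw [div_le_iff₀ hℓ0]
    nlinarith
  have hc1nonneg : (0:ℝ) ≤ ((k:ℕ):ℝ) * W / ℓ := by positivity
  -- the row set
  refine ⟨univ.filter (fun i => ((k:ℕ):ℝ) * W / ℓ < G i ∧ L i < B k),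
    univ.filter (fun j => kf j = k), a k, ?_, hk, ?_⟩
  · -- weight of S
    have hU1 : W - ((k:ℕ):ℝ) * W / ℓ ≤ ∑ i ∈ univ.filter (fun i => ((k:ℕ):ℝ) * W / ℓ < G i), wI i := by
      have hsplit := Finset.sum_filter_add_sum_filter_not univ
        (fun i => ((k:ℕ):ℝ) * W / ℓ < G i) wI
      have hA := lemA (((k:ℕ):ℝ) * W / ℓ) hc1nonneg
      have heq : univ.filter (fun i => ¬ ((k:ℕ):ℝ) * W / ℓ < G i)
          = univ.filter (fun i => G i ≤ ((k:ℕ):ℝ) * W / ℓ) := by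
        apply Finset.filter_congr; intro i _; simp [not_lt]
      rw [heq] at hsplit
      have : (∑ i, wI i) = W := hWdef.symm
      linarith [hsplit, hA]
    have hU2 : ∑ i ∈ univ.filter (fun i => B k ≤ L i), wI i ≤ W - B k := lemB (B k) hkW
    have hsplit2 := Finset.sum_filter_add_sum_filter_not
      (univ.filter (fun i => ((k:ℕ):ℝ) * W / ℓ < G i)) (fun i => B k ≤ L i) wI
    have hsub2 : (univ.filter (fun i => ((k:ℕ):ℝ) * W / ℓ < G i)).filter (fun i => B k ≤ L i)
        ⊆ univ.filter (fun i => B k ≤ L i) := by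
      intro i hi
      simp only [mem_filter, mem_univ, true_and] at hi ⊢
      exact hi.2
    have hle2 : ∑ i ∈ (univ.filter (fun i => ((k:ℕ):ℝ) * W / ℓ < G i)).filter
        (fun i => B k ≤ L i), wI i ≤ ∑ i ∈ univ.filter (fun i => B k ≤ L i), wI i :=
      Finset.sum_le_sum_of_subset_of_nonneg hsub2 (fun i _ _ => hwI i)
    have hSrw : (univ.filter (fun i => ((k:ℕ):ℝ) * W / ℓ < G i)).filter
        (fun i => ¬ B k ≤ L i)
        = univ.filter (fun i => ((k:ℕ):ℝ) * W / ℓ < G i ∧ L i < B k) := by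
      rw [Finset.filter_filter]
      apply Finset.filter_congr; intro i _; simp [not_le]
    have hBval : B k - ((k:ℕ):ℝ) * W / ℓ = W / ℓ := by rw [hBdef]; ring
    rw [← hSrw]
    linarith [hsplit2, hle2, hU2, hU1, hBval]
  · -- constancy
    intro i hi j hj
    simp only [mem_filter, mem_univ, true_and] at hi hj
    obtain ⟨hiG, hiL⟩ := hi
    have hφ : φ j i = k := by
      rcases lt_trichotomy (φ j i) k with hlt | heq | hgt
      · exfalso
        have h1 : F j (φ j i) < B (φ j i) := hkf_min j (φ j i) (hj ▸ hlt)
        have h2 : G i ≤ F j (φ j i) := by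
          apply Finset.sum_le_sum_of_subset_of_nonneg
          · intro i' hi'
            simp only [mem_filter, mem_univ, true_and] at hi' ⊢
            exact hmono j hi'
          · intro i' _ _; exact hwI i'
        have h3 : B (φ j i) ≤ ((k:ℕ):ℝ) * W / ℓ := by
          rw [hBdef]
          have hcast : (((φ j i : ℕ)):ℝ) + 1 ≤ ((k:ℕ):ℝ) := by
            exact_mod_cast Nat.succ_le_of_lt hlt
          have hWl : 0 ≤ W / (ℓ:ℝ) := by positivity
          calc ((((φ j i):ℕ):ℝ) + 1) * W / ℓ = ((((φ j i):ℕ):ℝ) + 1) * (W / ℓ) := by ring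
            _ ≤ ((k:ℕ):ℝ) * (W / ℓ) := by
                apply mul_le_mul_of_nonneg_right hcast hWl
            _ = ((k:ℕ):ℝ) * W / ℓ := by ring
        linarith
      · exact heq
      · exfalso
        have h1 : B k ≤ F j k := hj ▸ hkf_mem j
        have h2 : F j k ≤ L i := by
          apply Finset.sum_le_sum_of_subset_of_nonneg
          · intro i' hi'
            simp only [mem_filter, mem_univ, true_and] at hi' ⊢
            by_contra hcon
            push_neg at hcon
            exact absurd (hmono j hcon) (not_le.mpr (lt_of_le_of_lt hi' hgt))
          · intro i' _ _; exact hwI i'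
        linarith
    rw [hval j i, hφ]
end

section
/- Let R be a rate matrix on V = {1,…,n} with transition matrix M, stationary distribution σ, and λ = λ(R), and let d > 0 satisfy d_R(u) ≥ d for all u ∈ V. Let θ ≥ 1 and let G be a graph on V with maximum degree at most θ − 1 such that d_G(u) = 0 whenever d_R(u) ≥ θd. Let π be a probability measure on V, define π'(v) = Σ_{u∈V} π(u)·M(u,v), and let π'' be any probability measure of the form π''(u) = Σ_{v∈V} π'(v)·K(v,u), where K is a stochastic matrix with K(v,u) = 0 unless u = v or {u,v} is an edge of G. Then: μ_σ(π') ≤ λ·μ_σ(π), and μ_σ(π'')² ≤ θ⁴·(μ_σ(π')² + 1). -/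
open Filter MeasureTheory ProbabilityTheory Real
open scoped ENNReal NNReal Classical

namespace Paper

variable {n : ℕ}

/-- Row sum `d_R(u)`. -/
noncomputable def rowSum (R : Matrix (Fin n) (Fin n) ℝ) (u : Fin n) : ℝ := ∑ v, R u v

/-- Total sum `d_R(V)`. -/
noncomputable def totalSum (R : Matrix (Fin n) (Fin n) ℝ) : ℝ := ∑ u, rowSum R u

/-- A rate matrix: symmetric, nonnegative entries, positive row sums. -/
def IsRateMatrix (R : Matrix (Fin n) (Fin n) ℝ) : Prop :=
  (∀ u v, R u v = R v u) ∧ (∀ u v, 0 ≤ R u v) ∧ (∀ u, 0 < rowSum R u)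

/-- Transition matrix `M(u,v) = R(u,v)/d_R(u)`. -/
noncomputable def transM (R : Matrix (Fin n) (Fin n) ℝ) (u v : Fin n) : ℝ :=
  R u v / rowSum R u

/-- Stationary distribution `σ(u) = d_R(u)/d_R(V)`. -/
noncomputable def statDist (R : Matrix (Fin n) (Fin n) ℝ) (u : Fin n) : ℝ :=
  rowSum R u / totalSum R

/-- `σ(A)` for a finite vertex set `A`. -/
noncomputable def statDistSet (R : Matrix (Fin n) (Fin n) ℝ) (A : Finset (Fin n)) : ℝ :=
  ∑ u ∈ A, statDist R u

/-- `‖M‖ = max M(u,v)`. -/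
noncomputable def Mnorm (R : Matrix (Fin n) (Fin n) ℝ) : ℝ :=
  sSup {x : ℝ | ∃ u v, x = transM R u v}

/-- `‖R‖ = max R(u,v)`. -/
noncomputable def Rnorm (R : Matrix (Fin n) (Fin n) ℝ) : ℝ :=
  sSup {x : ℝ | ∃ u v, x = R u v}

/-- `μ_σ(π)`, the distance of `π` from stationarity. -/
noncomputable def muSigma (R : Matrix (Fin n) (Fin n) ℝ) (q : Fin n → ℝ) : ℝ :=
  Real.sqrt ((∑ v, (q v) ^ 2 / statDist R v) - 1)

/-- `λ(R) = max{|λ₂|, |λₙ|}`: since the transition matrix `M` of a rate matrix is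
reversible with respect to `σ` (hence self-adjoint in `L²(σ)` with largest eigenvalue `1`,
eigenvector the constants), this quantity equals the operator norm of `M` on the
`σ`-orthogonal complement of the constant functions. -/
noncomputable def lam (R : Matrix (Fin n) (Fin n) ℝ) : ℝ :=
  sSup {l : ℝ | ∃ g : Fin n → ℝ,
    (∑ v, g v * statDist R v) = 0 ∧ (∑ v, (g v) ^ 2 * statDist R v) = 1 ∧
    l = Real.sqrt (∑ v, (∑ u, transM R v u * g u) ^ 2 * statDist R v)}

/-- `γ_k(P) = Σ_u d_P(u)^{k-1} e^{-d_P(u)}`. -/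
noncomputable def gammaK (k : ℕ) (P : Matrix (Fin n) (Fin n) ℝ) : ℝ :=
  ∑ u, rowSum P u ^ (k - 1) * Real.exp (-(rowSum P u))

/-- The class `RM` of sequences of rate matrices, with scale `d = d(n)`. -/
def InRM (R : ∀ n, Matrix (Fin n) (Fin n) ℝ) (d : ℕ → ℝ) : Prop :=
  (∀ n, IsRateMatrix (R n)) ∧
  Tendsto (fun n => lam (R n)) atTop (nhds 0) ∧
  ∃ α γ b : ℝ, 0 ≤ α ∧ α < 1 / 2 ∧ 0 < γ ∧ 0 < b ∧
    (∀ n, lam (R n) ≤ ((n : ℝ) * Mnorm (R n)) ^ (-(α + γ))) ∧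
    (∀ n, 0 < d n ∧ (∀ u, d n ≤ rowSum (R n) u) ∧ totalSum (R n) ≤ b * d n * n) ∧
    (∀ n, ∀ A : Finset (Fin n), statDistSet (R n) A ≤ b * ((A.card : ℝ) / n) ^ (1 - 2 * α)) ∧
    (∀ n, Rnorm (R n) ≤ d n * (n : ℝ) ^ (-γ))

/-- The symmetric rate function on unordered pairs induced by `R`
(equal to `R u v` whenever `R` is symmetric). -/
noncomputable def symRate (R : Matrix (Fin n) (Fin n) ℝ) : Sym2 (Fin n) → ℝ :=
  Sym2.lift ⟨fun u v => (R u v + R v u) / 2, fun u v => by ring⟩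

/-- The law of a single exponential clock `E(u,v)` (valued in `ℝ≥0∞`, equal to `∞`
when the rate vanishes). -/
noncomputable def edgeMeasure (r : ℝ) : Measure ℝ≥0∞ :=
  if 0 < r then (expMeasure r).map ENNReal.ofReal else Measure.dirac ⊤

instance edgeMeasure.instIsProbabilityMeasure (r : ℝ) :
    IsProbabilityMeasure (edgeMeasure r) := by
  unfold edgeMeasure
  split
  · have := isProbabilityMeasure_expMeasure ‹0 < r›
    exact Measure.isProbabilityMeasure_map ENNReal.measurable_ofReal.aemeasurable
  · exact Measure.dirac.isProbabilityMeasure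

/-- The sample space of the random graph process: the family of exponential clocks. -/
abbrev ProcSpace (n : ℕ) := Sym2 (Fin n) → ℝ≥0∞

/-- The law of the whole family of independent exponential clocks. -/
noncomputable def procMeasure (R : Matrix (Fin n) (Fin n) ℝ) : Measure (ProcSpace n) :=
  Measure.pi fun e => edgeMeasure (symRate R e)

/-- The graph `G_{n,R}(t)` at time `t`. -/
def graphAt (ω : ProcSpace n) (t : ℝ≥0∞) : SimpleGraph (Fin n) where
  Adj u v := u ≠ v ∧ ω s(u, v) ≤ t
  symm := ⟨by
    intro u v h
    refine ⟨h.1.symm, ?_⟩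
    rw [Sym2.eq_swap]
    exact h.2⟩
  loopless := ⟨fun u h => h.1 rfl⟩

/-- The degree of a vertex. -/
noncomputable def deg {V : Type*} (G : SimpleGraph V) (v : V) : ℕ := (G.neighborSet v).ncard

/-- The (outer) neighbourhood `N_G(A)` of a vertex set. -/
def nbr {V : Type*} (G : SimpleGraph V) (A : Set V) : Set V :=
  {v | v ∉ A ∧ ∃ u ∈ A, G.Adj u v}

/-- A finite set of unordered pairs forming a matching (pairwise disjoint non-loops). -/
def IsMatchingFinset {V : Type*} (F : Finset (Sym2 V)) : Prop :=
  (∀ e ∈ F, ¬ e.IsDiag) ∧ ∀ e ∈ F, ∀ f ∈ F, e ≠ f → ∀ v, v ∈ e → v ∉ f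

/-- Property `A_k`: `⌊k/2⌋` Hamilton cycles plus, for odd `k`, a matching of size
`⌊n/2⌋`, all mutually edge-disjoint. -/
def HasAk {V : Type*} [Fintype V] (k : ℕ) (G : SimpleGraph V) : Prop :=
  ∃ (c : Fin (k / 2) → Set (Sym2 V)) (F : Finset (Sym2 V)),
    (∀ i, ∃ (v : V) (w : G.Walk v v), w.IsHamiltonianCycle ∧ c i = {e | e ∈ w.edges}) ∧
    (∀ i j, i ≠ j → Disjoint (c i) (c j)) ∧
    (if Odd k then
      ↑F ⊆ G.edgeSet ∧ IsMatchingFinset F ∧ F.card = Fintype.card V / 2 ∧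
        ∀ i, Disjoint (c i) (↑F : Set (Sym2 V))
    else F = ∅)

/-- `τ_k`: the hitting time of minimum degree `k`. -/
noncomputable def tauDeg (k : ℕ) (ω : ProcSpace n) : ℝ≥0∞ :=
  sInf {t : ℝ≥0∞ | ∀ v, k ≤ deg (graphAt ω t) v}

/-- `τ_{A_k}`: the hitting time of property `A_k`. -/
noncomputable def tauA (k : ℕ) (ω : ProcSpace n) : ℝ≥0∞ :=
  sInf {t : ℝ≥0∞ | HasAk k (graphAt ω t)}
end Paper

open Paper Filter

/-- **Lemma 15 (semirandom steps).**  Let `R` be a rate matrix with `d_R(u) ≥ d > 0` and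
let `G` have maximum degree at most `θ - 1` with `d_G(u) = 0` whenever `d_R(u) ≥ θd`.
For a probability measure `π`, one step of `M` contracts `μ_σ` by a factor `λ(R)`;
a subsequent lazy `G`-step (any stochastic kernel supported on loops and edges of `G`)
satisfies `μ_σ(π'')² ≤ θ⁴ (μ_σ(π')² + 1)`. -/
theorem lemma_semirandom_step (n : ℕ) (R : Matrix (Fin n) (Fin n) ℝ)
    (hR : IsRateMatrix R)
    (d : ℝ) (hd : 0 < d) (hdlow : ∀ u, d ≤ rowSum R u)
    (θ : ℝ) (hθ : 1 ≤ θ) (G : SimpleGraph (Fin n))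
    (hmax : ∀ u, (deg G u : ℝ) ≤ θ - 1)
    (hheavy : ∀ u, θ * d ≤ rowSum R u → deg G u = 0)
    (p : Fin n → ℝ) (hp : ∀ v, 0 ≤ p v) (hp1 : (∑ v, p v) = 1)
    (K : Matrix (Fin n) (Fin n) ℝ) (hK0 : ∀ v u, 0 ≤ K v u)
    (hK1 : ∀ v, (∑ u, K v u) = 1)
    (hKG : ∀ v u, K v u ≠ 0 → u = v ∨ G.Adj u v) :
    muSigma R (fun v => ∑ u, p u * transM R u v) ≤ lam R * muSigma R p ∧
    muSigma R (fun u => ∑ v, (∑ w, p w * transM R w v) * K v u) ^ 2 ≤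
      θ ^ 4 * (muSigma R (fun v => ∑ u, p u * transM R u v) ^ 2 + 1) := by
  classical
  obtain ⟨hsym, hnn, hrowpos⟩ := hR
  rcases Nat.eq_zero_or_pos n with rfl | hn
  · simp at hp1
  have hune : (Finset.univ : Finset (Fin n)).Nonempty := ⟨⟨0, hn⟩, Finset.mem_univ _⟩
  have htot : 0 < totalSum R := Finset.sum_pos (fun u _ => hrowpos u) hune
  have hσpos : ∀ v, 0 < statDist R v := fun v => div_pos (hrowpos v) htot
  have hσsum : (∑ v, statDist R v) = 1 := by
    simp only [statDist, ← Finset.sum_div]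
    exact div_self htot.ne'
  have htnn : ∀ u v, 0 ≤ transM R u v := fun u v =>
    div_nonneg (hnn u v) (hrowpos u).le
  have htrow : ∀ u, (∑ v, transM R u v) = 1 := by
    intro u
    simp only [transM, ← Finset.sum_div]
    exact div_self (hrowpos u).ne'
  have hrev : ∀ u v, statDist R u * transM R u v = statDist R v * transM R v u := by
    intro u v
    simp only [statDist, transM]
    rw [div_mul_div_comm, div_mul_div_comm, hsym u v]
    rw [mul_comm (rowSum R u) (R v u), mul_comm (rowSum R v) (R v u)]
    rw [mul_div_mul_right _ _ (hrowpos u).ne', mul_div_mul_right _ _ (hrowpos v).ne']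
  have hcol : ∀ u, (∑ v, statDist R v * transM R v u) = statDist R u := by
    intro u
    calc (∑ v, statDist R v * transM R v u)
        = ∑ v, statDist R u * transM R u v :=
          Finset.sum_congr rfl fun v _ => (hrev u v).symm
      _ = statDist R u * ∑ v, transM R u v := by rw [Finset.mul_sum]
      _ = statDist R u := by rw [htrow, mul_one]
  -- the centered density
  set q : Fin n → ℝ := fun v => p v / statDist R v - 1 with hqdef
  have hpq : ∀ v, p v = statDist R v * (1 + q v) := by
    intro v
    have hs : statDist R v ≠ 0 := (hσpos v).ne'
    rw [hqdef]
    field_simp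
    ring
  have hq0 : (∑ v, q v * statDist R v) = 0 := by
    have h : ∀ v, q v * statDist R v = p v - statDist R v := by
      intro v
      have hs : statDist R v ≠ 0 := (hσpos v).ne'
      rw [hqdef]
      field_simp
    rw [Finset.sum_congr rfl fun v _ => h v, Finset.sum_sub_distrib, hp1, hσsum, sub_self]
  have hqsq : (∑ v, (p v) ^ 2 / statDist R v) - 1 = ∑ v, (q v) ^ 2 * statDist R v := by
    have h : ∀ v, (q v) ^ 2 * statDist R v = (p v) ^ 2 / statDist R v - 2 * p v + statDist R v := by
      intro v
      have hs : statDist R v ≠ 0 := (hσpos v).ne'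
      rw [hqdef]
      field_simp
      ring
    rw [Finset.sum_congr rfl fun v _ => h v, Finset.sum_add_distrib, Finset.sum_sub_distrib,
      ← Finset.mul_sum, hp1, hσsum]
    ring
  -- the evolved density
  set Mq : Fin n → ℝ := fun v => ∑ u, transM R v u * q u with hMqdef
  have hπ' : ∀ v, (∑ u, p u * transM R u v) = statDist R v * (1 + Mq v) := by
    intro v
    have h : ∀ u, p u * transM R u v =
        statDist R v * transM R v u + statDist R v * (transM R v u * q u) := by
      intro u
      calc p u * transM R u v = statDist R u * transM R u v * (1 + q u) := by
            rw [hpq u]; ring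
        _ = statDist R v * transM R v u * (1 + q u) := by rw [hrev]
        _ = statDist R v * transM R v u + statDist R v * (transM R v u * q u) := by ring
    rw [Finset.sum_congr rfl fun u _ => h u, Finset.sum_add_distrib, ← Finset.mul_sum,
      ← Finset.mul_sum, htrow, hMqdef, mul_one]
    ring
  have hMq0 : (∑ v, Mq v * statDist R v) = 0 := by
    calc (∑ v, Mq v * statDist R v)
        = ∑ v, ∑ u, q u * (statDist R v * transM R v u) := by
          refine Finset.sum_congr rfl fun v _ => ?_
          rw [hMqdef]
          rw [Finset.sum_mul]
          exact Finset.sum_congr rfl fun u _ => by ring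
      _ = ∑ u, ∑ v, q u * (statDist R v * transM R v u) := Finset.sum_comm
      _ = ∑ u, q u * statDist R u := by
          refine Finset.sum_congr rfl fun u _ => ?_
          rw [← Finset.mul_sum, hcol]
      _ = 0 := hq0
  have hS' : (∑ v, (∑ u, p u * transM R u v) ^ 2 / statDist R v) - 1
      = ∑ v, (Mq v) ^ 2 * statDist R v := by
    have h : ∀ v, (∑ u, p u * transM R u v) ^ 2 / statDist R v
        = statDist R v + 2 * (Mq v * statDist R v) + (Mq v) ^ 2 * statDist R v := by
      intro v
      have hs : statDist R v ≠ 0 := (hσpos v).ne'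
      rw [hπ' v]
      field_simp
      ring
    rw [Finset.sum_congr rfl fun v _ => h v, Finset.sum_add_distrib, Finset.sum_add_distrib,
      hσsum, ← Finset.mul_sum, hMq0]
    ring
  -- Part 1
  have part1 : muSigma R (fun v => ∑ u, p u * transM R u v) ≤ lam R * muSigma R p := by
    simp only [muSigma]
    rw [hS', hqsq]
    have hAnn : 0 ≤ ∑ v, (q v) ^ 2 * statDist R v :=
      Finset.sum_nonneg fun v _ => mul_nonneg (sq_nonneg _) (hσpos v).le
    have hbdd : BddAbove {l : ℝ | ∃ g : Fin n → ℝ,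
        (∑ v, g v * statDist R v) = 0 ∧ (∑ v, (g v) ^ 2 * statDist R v) = 1 ∧
        l = Real.sqrt (∑ v, (∑ u, transM R v u * g u) ^ 2 * statDist R v)} := by
      refine ⟨1, ?_⟩
      rintro l ⟨g, hg0, hg1, rfl⟩
      have hterm : ∀ v, (∑ u, transM R v u * g u) ^ 2 ≤ ∑ u, transM R v u * (g u) ^ 2 := by
        intro v
        have h1 : ∀ u, Real.sqrt (transM R v u) * (Real.sqrt (transM R v u) * g u)
            = transM R v u * g u := fun u => by
          rw [← mul_assoc, Real.mul_self_sqrt (htnn v u)]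
        have h2 : ∀ u, Real.sqrt (transM R v u) ^ 2 = transM R v u := fun u =>
          Real.sq_sqrt (htnn v u)
        have h3 : ∀ u, (Real.sqrt (transM R v u) * g u) ^ 2
            = transM R v u * (g u) ^ 2 := fun u => by rw [mul_pow, h2]
        have hcs := Finset.sum_mul_sq_le_sq_mul_sq Finset.univ
          (fun u => Real.sqrt (transM R v u)) (fun u => Real.sqrt (transM R v u) * g u)
        simp only [h1, h2, h3] at hcs
        rw [htrow v, one_mul] at hcs
        exact hcs
      have key : (∑ v, (∑ u, transM R v u * g u) ^ 2 * statDist R v) ≤ 1 := by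
        calc (∑ v, (∑ u, transM R v u * g u) ^ 2 * statDist R v)
            ≤ ∑ v, (∑ u, transM R v u * (g u) ^ 2) * statDist R v :=
              Finset.sum_le_sum fun v _ =>
                mul_le_mul_of_nonneg_right (hterm v) (hσpos v).le
          _ = ∑ u, ∑ v, (g u) ^ 2 * (statDist R v * transM R v u) := by
              rw [← Finset.sum_comm]
              refine Finset.sum_congr rfl fun v _ => ?_
              rw [Finset.sum_mul]
              exact Finset.sum_congr rfl fun u _ => by ring
          _ = ∑ u, (g u) ^ 2 * statDist R u := by
              refine Finset.sum_congr rfl fun u _ => ?_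
              rw [← Finset.mul_sum, hcol]
          _ = 1 := hg1
      calc Real.sqrt (∑ v, (∑ u, transM R v u * g u) ^ 2 * statDist R v)
          ≤ Real.sqrt 1 := Real.sqrt_le_sqrt key
        _ = 1 := Real.sqrt_one
    rcases eq_or_lt_of_le hAnn with hA | hA
    · -- q ≡ 0
      have hqz : ∀ v, q v = 0 := by
        intro v
        have h0 := (Finset.sum_eq_zero_iff_of_nonneg
          (fun v _ => mul_nonneg (sq_nonneg (q v)) (hσpos v).le)).mp hA.symm v (Finset.mem_univ v)
        have := (mul_eq_zero.mp h0).resolve_right (hσpos v).ne'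
        exact pow_eq_zero_iff (n := 2) (by norm_num) |>.mp this
      have hMz : ∀ v, Mq v = 0 := by
        intro v
        show (∑ u, transM R v u * q u) = 0
        exact Finset.sum_eq_zero fun u _ => by rw [hqz u, mul_zero]
      rw [Finset.sum_eq_zero fun v _ => by rw [hMz v]; ring,
        Finset.sum_eq_zero fun v _ => by rw [hqz v]; ring]
      simp
    · set μ := Real.sqrt (∑ v, (q v) ^ 2 * statDist R v) with hμdef
      have hμpos : 0 < μ := Real.sqrt_pos.mpr hA
      have hμsq : μ ^ 2 = ∑ v, (q v) ^ 2 * statDist R v := Real.sq_sqrt hAnn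
      set g : Fin n → ℝ := fun v => q v / μ with hgdef
      have hg0 : (∑ v, g v * statDist R v) = 0 := by
        simp only [hgdef, div_mul_eq_mul_div, ← Finset.sum_div, hq0, zero_div]
      have hg1 : (∑ v, (g v) ^ 2 * statDist R v) = 1 := by
        simp only [hgdef, div_pow, div_mul_eq_mul_div, ← Finset.sum_div, ← hμsq]
        exact div_self (pow_ne_zero 2 hμpos.ne')
      have hMg : ∀ v, (∑ u, transM R v u * g u) = Mq v / μ := by
        intro v
        show (∑ u, transM R v u * g u) = (∑ u, transM R v u * q u) / μ
        simp only [hgdef, ← mul_div_assoc, ← Finset.sum_div]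
      have hle : Real.sqrt (∑ v, (∑ u, transM R v u * g u) ^ 2 * statDist R v) ≤ lam R := by
        rw [lam]
        exact le_csSup hbdd ⟨g, hg0, hg1, rfl⟩
      have heq : Real.sqrt (∑ v, (∑ u, transM R v u * g u) ^ 2 * statDist R v)
          = Real.sqrt (∑ v, (Mq v) ^ 2 * statDist R v) / μ := by
        have : (∑ v, (∑ u, transM R v u * g u) ^ 2 * statDist R v)
            = (∑ v, (Mq v) ^ 2 * statDist R v) / μ ^ 2 := by
          simp only [hMg, div_pow, div_mul_eq_mul_div, ← Finset.sum_div]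
        rw [this, Real.sqrt_div' _ (sq_nonneg μ), Real.sqrt_sq hμpos.le]
      rw [heq] at hle
      calc Real.sqrt (∑ v, (Mq v) ^ 2 * statDist R v)
          = Real.sqrt (∑ v, (Mq v) ^ 2 * statDist R v) / μ * μ := by
            field_simp
        _ ≤ lam R * μ := mul_le_mul_of_nonneg_right hle hμpos.le
  refine ⟨part1, ?_⟩
  -- Part 2
  have hθ0 : (0:ℝ) < θ := lt_of_lt_of_le one_pos hθ
  set π' : Fin n → ℝ := fun v => ∑ w, p w * transM R w v with hπdef
  have hπapp : ∀ v, (∑ w, p w * transM R w v) = π' v := fun v => rfl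
  have hπnn : ∀ v, 0 ≤ π' v := fun v =>
    Finset.sum_nonneg fun w _ => mul_nonneg (hp w) (htnn w v)
  have hπ1 : (∑ v, π' v) = 1 := by
    calc (∑ v, π' v) = ∑ w, ∑ v, p w * transM R w v := Finset.sum_comm
      _ = ∑ w, p w * ∑ v, transM R w v :=
          Finset.sum_congr rfl fun w _ => (Finset.mul_sum _ _ _).symm
      _ = ∑ w, p w := Finset.sum_congr rfl fun w _ => by rw [htrow, mul_one]
      _ = 1 := hp1
  set S' : ℝ := ∑ v, (π' v) ^ 2 / statDist R v with hS'def
  have hS'1 : 1 ≤ S' := by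
    have h1 : ∀ v, Real.sqrt (statDist R v) * (π' v / Real.sqrt (statDist R v)) = π' v := by
      intro v
      have hs : Real.sqrt (statDist R v) ≠ 0 := (Real.sqrt_pos.mpr (hσpos v)).ne'
      field_simp
    have h2 : ∀ v, Real.sqrt (statDist R v) ^ 2 = statDist R v := fun v =>
      Real.sq_sqrt (hσpos v).le
    have h3 : ∀ v, (π' v / Real.sqrt (statDist R v)) ^ 2 = (π' v) ^ 2 / statDist R v := by
      intro v; rw [div_pow, h2]
    have hcs := Finset.sum_mul_sq_le_sq_mul_sq Finset.univ
      (fun v => Real.sqrt (statDist R v)) (fun v => π' v / Real.sqrt (statDist R v))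
    simp only [h1, h2, h3] at hcs
    rw [hπ1, hσsum, one_pow, one_mul] at hcs
    rw [hS'def]
    exact hcs
  have hcard : ∀ u, (Finset.univ.filter (fun v => G.Adj u v)).card = deg G u := by
    intro u
    rw [deg, ← Set.ncard_coe_finset]
    congr 1
    ext v
    simp [SimpleGraph.neighborSet]
  have hKcol : ∀ u, (∑ v, K v u) ≤ θ := by
    intro u
    set T := insert u (Finset.univ.filter (fun v => G.Adj u v)) with hT
    have hsub : ∀ v, v ∉ T → K v u = 0 := by
      intro v hv
      by_contra hKne
      rcases hKG v u hKne with h | h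
      · exact hv (by rw [← h]; exact Finset.mem_insert_self _ _)
      · exact hv (Finset.mem_insert_of_mem (by simp [h]))
    have heq : (∑ v, K v u) = ∑ v ∈ T, K v u :=
      (Finset.sum_subset (Finset.subset_univ T) fun v _ hv => hsub v hv).symm
    have hone : ∀ v, K v u ≤ 1 := by
      intro v
      calc K v u ≤ ∑ w, K v w :=
            Finset.single_le_sum (fun w _ => hK0 v w) (Finset.mem_univ u)
        _ = 1 := hK1 v
    calc (∑ v, K v u) = ∑ v ∈ T, K v u := heq
      _ ≤ ∑ v ∈ T, (1:ℝ) := Finset.sum_le_sum fun v _ => hone v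
      _ = (T.card : ℝ) := by simp
      _ ≤ (deg G u : ℝ) + 1 := by
          have h1 : T.card ≤ deg G u + 1 := by
            rw [← hcard u]; exact Finset.card_insert_le _ _
          exact_mod_cast h1
      _ ≤ θ := by have := hmax u; linarith
  have hdegpos : ∀ u v, G.Adj u v → deg G u ≠ 0 := by
    intro u v h
    have hpos : 0 < (G.neighborSet u).ncard :=
      (Set.ncard_pos (Set.toFinite _)).mpr ⟨v, h⟩
    exact hpos.ne'
  have hσratio : ∀ v u, K v u ≠ 0 → statDist R v ≤ θ * statDist R u := by
    intro v u hKne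
    rcases hKG v u hKne with h | h
    · subst h
      nlinarith [hσpos u]
    · have h1 : ¬ (θ * d ≤ rowSum R v) := fun hh => hdegpos v u h.symm (hheavy v hh)
      have h2 : rowSum R v < θ * d := lt_of_not_ge h1
      have h3 : θ * d ≤ θ * rowSum R u := mul_le_mul_of_nonneg_left (hdlow u) hθ0.le
      show rowSum R v / totalSum R ≤ θ * (rowSum R u / totalSum R)
      rw [← mul_div_assoc]
      exact (div_le_div_iff_of_pos_right htot).mpr (by linarith)
  have hCS : ∀ u, (∑ v, π' v * K v u) ^ 2 ≤ θ * ∑ v, K v u * (π' v) ^ 2 := by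
    intro u
    have h1 : ∀ v, Real.sqrt (K v u) * (Real.sqrt (K v u) * π' v) = π' v * K v u := by
      intro v
      rw [← mul_assoc, Real.mul_self_sqrt (hK0 v u)]
      ring
    have h2 : ∀ v, Real.sqrt (K v u) ^ 2 = K v u := fun v => Real.sq_sqrt (hK0 v u)
    have h3 : ∀ v, (Real.sqrt (K v u) * π' v) ^ 2 = K v u * (π' v) ^ 2 := fun v => by
      rw [mul_pow, h2]
    have hcs := Finset.sum_mul_sq_le_sq_mul_sq Finset.univ
      (fun v => Real.sqrt (K v u)) (fun v => Real.sqrt (K v u) * π' v)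
    simp only [h1, h2, h3] at hcs
    calc (∑ v, π' v * K v u) ^ 2 ≤ (∑ v, K v u) * ∑ v, K v u * (π' v) ^ 2 := hcs
      _ ≤ θ * ∑ v, K v u * (π' v) ^ 2 :=
          mul_le_mul_of_nonneg_right (hKcol u)
            (Finset.sum_nonneg fun v _ => mul_nonneg (hK0 v u) (sq_nonneg _))
  have hterm : ∀ u v, K v u * (π' v) ^ 2 / statDist R u
      ≤ θ * (K v u * (π' v) ^ 2 / statDist R v) := by
    intro u v
    by_cases hz : K v u = 0
    · simp [hz]
    · have hr := hσratio v u hz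
      have ha : 0 ≤ K v u * (π' v) ^ 2 := mul_nonneg (hK0 v u) (sq_nonneg _)
      rw [← mul_div_assoc, div_le_div_iff₀ (hσpos u) (hσpos v)]
      nlinarith [mul_le_mul_of_nonneg_left hr ha]
  have hchain : (∑ u, (∑ v, π' v * K v u) ^ 2 / statDist R u) ≤ θ ^ 2 * S' := by
    calc (∑ u, (∑ v, π' v * K v u) ^ 2 / statDist R u)
        ≤ ∑ u, (θ * ∑ v, K v u * (π' v) ^ 2) / statDist R u :=
          Finset.sum_le_sum fun u _ => (div_le_div_iff_of_pos_right (hσpos u)).mpr (hCS u)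
      _ = ∑ u, ∑ v, θ * (K v u * (π' v) ^ 2 / statDist R u) := by
          refine Finset.sum_congr rfl fun u _ => ?_
          rw [← Finset.mul_sum, ← Finset.sum_div, ← mul_div_assoc]
      _ ≤ ∑ u, ∑ v, θ * (θ * (K v u * (π' v) ^ 2 / statDist R v)) :=
          Finset.sum_le_sum fun u _ => Finset.sum_le_sum fun v _ =>
            mul_le_mul_of_nonneg_left (hterm u v) hθ0.le
      _ = ∑ v, ∑ u, θ ^ 2 * ((π' v) ^ 2 / statDist R v) * K v u := by
          rw [Finset.sum_comm]
          exact Finset.sum_congr rfl fun v _ => Finset.sum_congr rfl fun u _ => by ring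
      _ = ∑ v, θ ^ 2 * ((π' v) ^ 2 / statDist R v) := by
          refine Finset.sum_congr rfl fun v _ => ?_
          rw [← Finset.mul_sum, hK1, mul_one]
      _ = θ ^ 2 * S' := by
          rw [hS'def, Finset.mul_sum]
  have hμ' : muSigma R π' ^ 2 = S' - 1 := by
    have h0 : (0:ℝ) ≤ (∑ v, (π' v) ^ 2 / statDist R v) - 1 := by
      rw [hS'def] at hS'1; linarith
    simp only [muSigma]
    rw [Real.sq_sqrt h0, hS'def]
  simp only [hπapp, hμ']
  have hrw : S' - 1 + 1 = S' := by ring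
  rw [hrw]
  simp only [muSigma]
  have hθ4 : (0:ℝ) < θ ^ 4 := by positivity
  rcases le_or_gt (∑ u, (∑ v, π' v * K v u) ^ 2 / statDist R u) 1 with hle | hgt
  · rw [Real.sqrt_eq_zero'.mpr (by linarith)]
    nlinarith [hθ4, hS'1]
  · rw [Real.sq_sqrt (by linarith)]
    have hθ24 : θ ^ 2 ≤ θ ^ 4 := pow_le_pow_right₀ hθ (by norm_num)
    have h5 : θ ^ 2 * S' ≤ θ ^ 4 * S' :=
      mul_le_mul_of_nonneg_right hθ24 (by linarith)
    linarith
end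

section
/- Let β ∈ (0,1] and let G be a graph on a vertex set V with |V| = n such that every A ⊆ V with |A| < βn satisfies |N_G(A)| ≥ 2|A|. Suppose s_2(G) < n and that G contains a path with s_2(G) edges. For U ⊆ V, let EP_2(U) denote the set of ordered pairs (x,y) such that some path in G with exactly s_2(G) edges has endpoints x and y and vertex set U. Then there exists U ⊆ V with |EP_2(U)| ≥ (βn)². -/
namespace Paper

/-- `s_2(G)`: the maximum number of edges of a path or cycle contained in `G`. -/
noncomputable def sTwo {V : Type*} (G : SimpleGraph V) : ℕ :=
  sSup {m : ℕ | (∃ (u v : V) (w : G.Walk u v), w.IsPath ∧ w.length = m) ∨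
    (∃ (u : V) (w : G.Walk u u), w.IsCycle ∧ w.length = m)}

/-- `EP₂(U)`: ordered pairs `(x,y)` of endpoints of longest paths of `G` (paths with
`s_2(G)` edges) with vertex set `U`. -/
def EP2 {V : Type*} [Fintype V] (G : SimpleGraph V) (U : Set V) : Set (V × V) :=
  {q | ∃ w : G.Walk q.1 q.2, w.IsPath ∧ w.length = sTwo G ∧ {v | v ∈ w.support} = U}

end Paper

open Paper

namespace L19
variable {V : Type*}

/-- `x,y` occur consecutively (in this order) in `l`. -/
def Con (l : List V) (x y : V) : Prop := ∃ i : ℕ, l[i]? = some x ∧ l[i+1]? = some y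

lemma con_append_left {l t : List V} {x y : V} (h : Con l x y) : Con (l ++ t) x y := by
  obtain ⟨i, hx, hy⟩ := h
  have hi : i + 1 < l.length := (List.getElem?_eq_some_iff.1 hy).1
  exact ⟨i, by rw [List.getElem?_append_left (by omega)]; exact hx,
    by rw [List.getElem?_append_left hi]; exact hy⟩

lemma con_append_right {l t : List V} {x y : V} (h : Con t x y) : Con (l ++ t) x y := by
  obtain ⟨i, hx, hy⟩ := h
  refine ⟨l.length + i, ?_, ?_⟩
  · rw [List.getElem?_append_right (by omega)]
    simpa using hx
  · rw [List.getElem?_append_right (by omega)]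
    have h2 : l.length + i + 1 - l.length = i + 1 := by omega
    rw [h2]; exact hy

lemma con_append_cases {l t : List V} {x y : V} (h : Con (l ++ t) x y) :
    Con l x y ∨ Con t x y ∨ (l.getLast? = some x ∧ t.head? = some y) := by
  obtain ⟨i, hx, hy⟩ := h
  by_cases h1 : i + 1 < l.length
  · left
    exact ⟨i, by rwa [List.getElem?_append_left (by omega)] at hx,
      by rwa [List.getElem?_append_left h1] at hy⟩
  by_cases h2 : l.length ≤ i
  · right; left
    refine ⟨i - l.length, ?_, ?_⟩
    · rwa [List.getElem?_append_right h2] at hx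
    · rw [List.getElem?_append_right (by omega)] at hy
      have : i + 1 - l.length = i - l.length + 1 := by omega
      rwa [this] at hy
  · right; right
    have hil : i < l.length := by omega
    have hieq : i + 1 = l.length := by omega
    constructor
    · rw [List.getLast?_eq_getElem?]
      have : l.length - 1 = i := by omega
      rw [this]
      rwa [List.getElem?_append_left hil] at hx
    · rw [List.head?_eq_getElem?]
      rw [List.getElem?_append_right (by omega)] at hy
      rwa [hieq, Nat.sub_self] at hy

lemma con_reverse {l : List V} {x y : V} (h : Con l x y) : Con l.reverse y x := by
  obtain ⟨i, hx, hy⟩ := h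
  have hi : i + 1 < l.length := (List.getElem?_eq_some_iff.1 hy).1
  refine ⟨l.length - i - 2, ?_, ?_⟩
  · rw [List.getElem?_reverse (by omega)]
    have : l.length - 1 - (l.length - i - 2) = i + 1 := by omega
    rw [this]; exact hy
  · rw [List.getElem?_reverse (by omega)]
    have : l.length - 1 - (l.length - i - 2 + 1) = i := by omega
    rw [this]; exact hx

lemma pos_unique {l : List V} (hn : l.Nodup) {i j : ℕ} {u : V}
    (hi : l[i]? = some u) (hj : l[j]? = some u) : i = j := by
  obtain ⟨h1, e1⟩ := List.getElem?_eq_some_iff.1 hi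
  obtain ⟨h2, e2⟩ := List.getElem?_eq_some_iff.1 hj
  exact (hn.getElem_inj_iff).1 (e1.trans e2.symm)

lemma mem_getElem? {l : List V} {u : V} (h : u ∈ l) : ∃ i : ℕ, l[i]? = some u := by
  obtain ⟨n, hn, e⟩ := List.getElem_of_mem h
  exact ⟨n, List.getElem?_eq_some_iff.2 ⟨hn, e⟩⟩

lemma getLast?_mem' {l : List V} {b : V} (h : l.getLast? = some b) : b ∈ l := by
  obtain ⟨h1, e1⟩ := List.getElem?_eq_some_iff.1 (List.getLast?_eq_getElem? (l := l) ▸ h)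
  exact e1 ▸ List.getElem_mem h1

lemma exists_walk {G : SimpleGraph V} : ∀ (l : List V) {x y : V}, l.Chain' G.Adj →
    l.head? = some x → l.getLast? = some y → ∃ w : G.Walk x y, w.support = l
  | [], x, y, _, hh, _ => by simp at hh
  | [a], x, y, _, hh, hl => by
    simp only [List.head?_cons, Option.some.injEq] at hh
    simp only [List.getLast?_singleton, Option.some.injEq] at hl
    subst hh; subst hl
    exact ⟨SimpleGraph.Walk.nil, rfl⟩
  | a :: b :: t, x, y, hc, hh, hl => by
    simp only [List.head?_cons, Option.some.injEq] at hh
    subst hh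
    unfold List.Chain' at hc
    rw [List.isChain_cons_cons] at hc
    have hl' : (b :: t).getLast? = some y := by
      rwa [List.getLast?_cons_cons] at hl
    obtain ⟨w', hw'⟩ := exists_walk (b :: t) hc.2 rfl hl'
    exact ⟨SimpleGraph.Walk.cons hc.1 w', by rw [SimpleGraph.Walk.support_cons, hw']⟩



open Paper

set_option linter.unusedSectionVars false
variable [Fintype V] {G : SimpleGraph V}

lemma sTwo_bddAbove (G : SimpleGraph V) :
    ∀ m ∈ {m : ℕ | (∃ (u v : V) (w : G.Walk u v), w.IsPath ∧ w.length = m) ∨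
      (∃ (u : V) (w : G.Walk u u), w.IsCycle ∧ w.length = m)}, m ≤ Fintype.card V := by
  rintro m (⟨u, v, w, hw, rfl⟩ | ⟨u, w, hw, rfl⟩)
  · exact hw.length_lt.le
  · have h1 : w.support.tail.Nodup := hw.support_nodup
    have h2 : w.support.tail.length = w.length := by
      have := w.length_support
      simp [List.length_tail, this]
    exact h2 ▸ h1.length_le_card

lemma path_le {x y : V} (w : G.Walk x y) (hw : w.IsPath) : w.length ≤ sTwo G :=
  le_csSup ⟨Fintype.card V, sTwo_bddAbove G⟩ (Or.inl ⟨x, y, w, hw, rfl⟩)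


/-- Pósa rotations of a path (as a list), keeping the head fixed. -/
inductive Rot (G : SimpleGraph V) (P0 : List V) : List V → Prop
  | base : Rot G P0 P0
  | step {l₁ l₂ : List V} {x y : V} : Rot G P0 (l₁ ++ l₂) → l₁ ≠ [] → 2 ≤ l₂.length →
      l₁.getLast? = some x → l₂.getLast? = some y → G.Adj x y → Rot G P0 (l₁ ++ l₂.reverse)

/-- Endpoints reachable by rotations. -/
def RotE (G : SimpleGraph V) (P0 : List V) : Set V :=
  {b | ∃ l, Rot G P0 l ∧ l.getLast? = some b}

variable {P0 : List V}

lemma rot_mem (h : Rot G P0 l) : ∀ v, v ∈ l ↔ v ∈ P0 := by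
  induction h with
  | base => intro v; rfl
  | step _ _ _ _ _ _ ih =>
    intro v
    rw [← ih v]
    simp [List.mem_append]

lemma rot_length (h : Rot G P0 l) : l.length = P0.length := by
  induction h with
  | base => rfl
  | step _ _ _ _ _ _ ih => simpa using ih

lemma rot_nodup (hn : P0.Nodup) (h : Rot G P0 l) : l.Nodup := by
  induction h with
  | base => exact hn
  | @step l₁ l₂ x y _ h1 h2 hx hy hadj ih =>
    exact (((List.reverse_perm l₂).symm.append_left l₁)).nodup ih

lemma rot_chain (hc : P0.Chain' G.Adj) (h : Rot G P0 l) : l.Chain' G.Adj := by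
  induction h with
  | base => exact hc
  | @step l₁ l₂ x y _ h1 h2 hx hy hadj ih =>
    unfold List.Chain' at ih ⊢
    rw [List.isChain_append] at ih ⊢
    refine ⟨ih.1, ?_, ?_⟩
    · rw [List.isChain_reverse]
      exact ih.2.1.imp fun a b hab => hab.symm
    · intro x' hx' y' hy'
      rw [List.head?_reverse] at hy'
      rw [hx, Option.mem_some_iff] at hx'
      rw [hy, Option.mem_some_iff] at hy'
      exact hx' ▸ hy' ▸ hadj

lemma rot_head (h : Rot G P0 l) : l.head? = P0.head? := by
  induction h with
  | base => rfl
  | @step l₁ l₂ x y _ h1 h2 hx hy hadj ih =>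
    obtain ⟨a, s, rfl⟩ := List.exists_cons_of_ne_nil h1
    simpa using ih

lemma rot_last_append {l₁ l₂ : List V} (h : l₂ ≠ []) :
    (l₁ ++ l₂.reverse).getLast? = l₂.head? := by
  rw [List.getLast?_append, List.getLast?_reverse]
  obtain ⟨a, s, rfl⟩ := List.exists_cons_of_ne_nil h
  rfl

lemma rot_inv (h : Rot G P0 l) {x y : V} (hxy : Con P0 x y) :
    (Con l x y ∨ Con l y x) ∨ x ∈ RotE G P0 ∨ y ∈ RotE G P0 := by
  induction h with
  | base => exact Or.inl (Or.inl hxy)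
  | @step l₁ l₂ x0 y0 hr h1 h2 hx0 hy0 hadj ih =>
    have hl2 : l₂ ≠ [] := by intro h; simp [h] at h2
    rcases ih with (hcon | hcon) | hR
    · rcases con_append_cases hcon with hc1 | hc2 | ⟨hlast, hhead⟩
      · exact Or.inl (Or.inl (con_append_left hc1))
      · exact Or.inl (Or.inr (con_append_right (con_reverse hc2)))
      · exact Or.inr (Or.inr ⟨_, Rot.step hr h1 h2 hx0 hy0 hadj,
          (rot_last_append hl2).trans hhead⟩)
    · rcases con_append_cases hcon with hc1 | hc2 | ⟨hlast, hhead⟩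
      · exact Or.inl (Or.inr (con_append_left hc1))
      · exact Or.inl (Or.inl (con_append_right (con_reverse hc2)))
      · exact Or.inr (Or.inl ⟨_, Rot.step hr h1 h2 hx0 hy0 hadj,
          (rot_last_append hl2).trans hhead⟩)
    · exact Or.inr hR

lemma rotate_endpoint {l : List V} {p : ℕ} {u w b : V} (hl : Rot G P0 l)
    (hp : l[p]? = some u) (hq : l[p + 1]? = some w) (hb : l.getLast? = some b)
    (hadj : G.Adj u b) (hwb : w ≠ b) : w ∈ RotE G P0 := by
  obtain ⟨hplt, _⟩ := List.getElem?_eq_some_iff.1 hp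
  obtain ⟨hqlt, _⟩ := List.getElem?_eq_some_iff.1 hq
  set l₁ := l.take (p + 1) with hl₁
  set l₂ := l.drop (p + 1) with hl₂
  have hsplit : l₁ ++ l₂ = l := List.take_append_drop _ _
  have hlen1 : l₁.length = p + 1 := by
    rw [hl₁, List.length_take]; omega
  have hne1 : l₁ ≠ [] := by
    intro h; rw [h] at hlen1; simp at hlen1
  have hlast1 : l₁.getLast? = some u := by
    rw [List.getLast?_eq_getElem?, hlen1]
    simp only [Nat.add_sub_cancel]
    rw [hl₁, List.getElem?_take]
    simp only [Nat.lt_succ_self, if_true]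
    exact hp
  have hhead2 : l₂.head? = some w := by
    rw [List.head?_eq_getElem?, hl₂, List.getElem?_drop]
    simpa using hq
  have hne2 : l₂ ≠ [] := by
    intro h; rw [h] at hhead2; simp at hhead2
  have hlast2 : l₂.getLast? = some b := by
    rw [← hsplit, List.getLast?_append] at hb
    obtain ⟨a, s, hs⟩ := List.exists_cons_of_ne_nil hne2
    rw [hs] at hb ⊢
    simpa [List.getLast?_cons] using hb
  have hlen2 : 2 ≤ l₂.length := by
    rcases Nat.lt_or_ge l₂.length 2 with h | h
    · exfalso
      obtain ⟨a, s, hs⟩ := List.exists_cons_of_ne_nil hne2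
      have : s = [] := by
        rw [hs] at h; simp at h
        exact h
      rw [hs, this] at hhead2 hlast2
      simp at hhead2 hlast2
      exact hwb (hhead2 ▸ hlast2.symm ▸ rfl)
    · exact h
  refine ⟨_, Rot.step (hsplit ▸ hl) hne1 hlen2 hlast1 hlast2 hadj, ?_⟩
  exact (rot_last_append hne2).trans hhead2

lemma no_extension {l : List V} {b v : V} (hc : l.Chain' G.Adj) (hn : l.Nodup)
    (hlen : l.length = sTwo G + 1) (hb : l.getLast? = some b)
    (hadj : G.Adj b v) (hv : v ∉ l) : False := by
  have hne : l ≠ [] := by intro h; rw [h] at hb; simp at hb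
  obtain ⟨a, s, rfl⟩ := List.exists_cons_of_ne_nil hne
  have hc' : (a :: s ++ [v]).Chain' G.Adj := by
    unfold List.Chain'
    rw [List.isChain_append]
    refine ⟨hc, List.isChain_singleton v, ?_⟩
    intro x hx y hy
    rw [hb, Option.mem_some_iff] at hx
    simp only [List.head?_cons, Option.mem_some_iff] at hy
    exact hx ▸ hy ▸ hadj
  have hh : (a :: s ++ [v]).head? = some a := rfl
  have hl' : (a :: s ++ [v]).getLast? = some v := by
    rw [List.getLast?_append]; rfl
  obtain ⟨w, hw⟩ := exists_walk _ hc' hh hl'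
  have hwp : w.IsPath := by
    rw [SimpleGraph.Walk.isPath_def, hw, List.nodup_append]
    refine ⟨hn, List.nodup_singleton v, fun x hx y hxv hxy => ?_⟩
    simp only [List.mem_singleton] at hxv
    subst hxy; subst hxv; exact hv hx
  have hwl : w.length = sTwo G + 1 := by
    have h1 := w.length_support
    rw [hw] at h1
    have h2 : (a :: s ++ [v]).length = (a :: s).length + 1 := by simp
    omega
  have := path_le w hwp
  omega


lemma posa_claim (hc : P0.Chain' G.Adj) (hn : P0.Nodup) (hlen : P0.length = sTwo G + 1)
    {u : V} (hu : u ∈ nbr G (RotE G P0)) :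
    ∃ i j : ℕ, (∃ r, P0[i]? = some r ∧ r ∈ RotE G P0) ∧ P0[j]? = some u ∧
      (i = j + 1 ∨ j = i + 1) := by
  obtain ⟨huR, b, hbR, hadj⟩ := hu
  obtain ⟨l, hl, hlast⟩ := hbR
  have lc := rot_chain hc hl
  have ln := rot_nodup hn hl
  have llen : l.length = sTwo G + 1 := (rot_length hl).trans hlen
  have hbRmem : b ∈ RotE G P0 := ⟨l, hl, hlast⟩
  have hul : u ∈ l := by
    by_contra hnot
    exact no_extension lc ln llen hlast hadj hnot
  have huP : u ∈ P0 := (rot_mem hl u).1 hul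
  obtain ⟨j, hj⟩ := mem_getElem? huP
  have hjlt : j < P0.length := (List.getElem?_eq_some_iff.1 hj).1
  have hub : u ≠ b := fun h => huR (h ▸ hbRmem)
  obtain ⟨p, hp⟩ := mem_getElem? hul
  have hplt : p < l.length := (List.getElem?_eq_some_iff.1 hp).1
  have hpne : p ≠ l.length - 1 := by
    intro h
    have hb' : l[p]? = some b := by
      rw [h, ← List.getLast?_eq_getElem?]; exact hlast
    exact hub (Option.some.inj (hp.symm.trans hb'))
  have hp1 : p + 1 < l.length := by omega
  have hj1 : j + 1 < P0.length := by
    rcases Nat.lt_or_ge (j + 1) P0.length with h | h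
    · exact h
    · exfalso
      have hjm : j = P0.length - 1 := by omega
      have hlu : P0.getLast? = some u := by
        rw [List.getLast?_eq_getElem?, ← hjm]; exact hj
      exact huR ⟨P0, Rot.base, hlu⟩
  obtain ⟨y, hy⟩ : ∃ y, P0[j + 1]? = some y := ⟨_, List.getElem?_eq_some_iff.2 ⟨hj1, rfl⟩⟩
  by_cases hyR : y ∈ RotE G P0
  · exact ⟨j + 1, j, ⟨y, hy, hyR⟩, hj, Or.inl rfl⟩
  have huy : Con P0 u y := ⟨j, hj, hy⟩
  have hyb : y ≠ b := fun h => hyR (h ▸ hbRmem)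
  rcases rot_inv hl huy with (hcon | hcon) | (h | h)
  · obtain ⟨i, hiu, hiy⟩ := hcon
    have hip : i = p := pos_unique ln hiu hp
    rw [hip] at hiy
    exact absurd (rotate_endpoint hl hp hiy hlast hadj.symm hyb) hyR
  · obtain ⟨i, hiy, hiu⟩ := hcon
    have hip : i + 1 = p := pos_unique ln hiu hp
    have hj0 : j ≠ 0 := by
      intro h0
      have hh : l[0]? = some u := by
        rw [← List.head?_eq_getElem?, rot_head hl, List.head?_eq_getElem?, ← h0]
        exact hj
      have := pos_unique ln hh hp
      omega
    obtain ⟨x, hx⟩ : ∃ x, P0[j - 1]? = some x := ⟨_, List.getElem?_eq_some_iff.2 ⟨by omega, rfl⟩⟩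
    by_cases hxR : x ∈ RotE G P0
    · exact ⟨j - 1, j, ⟨x, hx, hxR⟩, hj, Or.inr (by omega)⟩
    have hxu : Con P0 x u := ⟨j - 1, hx, by rw [(by omega : j - 1 + 1 = j)]; exact hj⟩
    have hxb : x ≠ b := fun h => hxR (h ▸ hbRmem)
    rcases rot_inv hl hxu with (hcon2 | hcon2) | (h | h)
    · obtain ⟨i2, hix, hiu2⟩ := hcon2
      have hi2 : i2 + 1 = p := pos_unique ln hiu2 hp
      have hi2i : i2 = i := by omega
      rw [hi2i] at hix
      have hxy : x = y := Option.some.inj (hix.symm.trans hiy)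
      have : j - 1 = j + 1 := pos_unique hn (hxy ▸ hx) hy
      omega
    · obtain ⟨i2, hiu2, hix⟩ := hcon2
      have hi2 : i2 = p := pos_unique ln hiu2 hp
      rw [hi2] at hix
      exact absurd (rotate_endpoint hl hp hix hlast hadj.symm hxb) hxR
    · exact absurd h hxR
    · exact absurd h huR
  · exact absurd h huR
  · exact absurd h hyR


lemma rotE_mem_base {r : V} (h : r ∈ RotE G P0) : r ∈ P0 := by
  obtain ⟨l, hl, hlast⟩ := h
  exact (rot_mem hl r).1 (getLast?_mem' hlast)

lemma posa_count (hc : P0.Chain' G.Adj) (hn : P0.Nodup) (hlen : P0.length = sTwo G + 1) :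
    (nbr G (RotE G P0)).ncard + 1 ≤ 2 * (RotE G P0).ncard := by
  classical
  set R := RotE G P0 with hR
  have hne : P0 ≠ [] := by
    intro h; rw [h] at hlen; simp at hlen
  have hm1 : 1 ≤ P0.length := by rw [hlen]; omega
  set d : V := P0.getLast hne with hd
  set f : ℕ → V := fun i => P0.getD i d with hf
  set J : Finset ℕ := (Finset.range P0.length).filter
    (fun i => ∃ r, P0[i]? = some r ∧ r ∈ R) with hJ
  have hfJ : ∀ i ∈ J, ∀ r, P0[i]? = some r → f i = r := by
    intro i _ r hr
    rw [hf]
    simp only [List.getD_eq_getElem?_getD, hr, Option.getD_some]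
  have himg : J.image f = (Set.toFinite R).toFinset := by
    ext r
    simp only [Finset.mem_image, Set.Finite.mem_toFinset]
    constructor
    · rintro ⟨i, hiJ, rfl⟩
      obtain ⟨r', hir', hr'R⟩ := (Finset.mem_filter.1 hiJ).2
      rwa [hfJ i hiJ r' hir']
    · intro hrR
      obtain ⟨i, hi⟩ := mem_getElem? (rotE_mem_base hrR)
      have hilt : i < P0.length := (List.getElem?_eq_some_iff.1 hi).1
      have hiJ : i ∈ J := Finset.mem_filter.2 ⟨Finset.mem_range.2 hilt, r, hi, hrR⟩
      exact ⟨i, hiJ, hfJ i hiJ r hi⟩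
  have hinj : Set.InjOn f ↑J := by
    intro i hiJ i' hi'J he
    obtain ⟨r, hir, _⟩ := (Finset.mem_filter.1 hiJ).2
    obtain ⟨r', hir', _⟩ := (Finset.mem_filter.1 hi'J).2
    rw [hfJ i hiJ r hir, hfJ i' hi'J r' hir'] at he
    exact pos_unique hn hir (he ▸ hir')
  have hcardR : R.ncard = J.card := by
    rw [Set.ncard_eq_toFinset_card R (Set.toFinite R), ← himg,
      Finset.card_image_of_injOn hinj]
  set K : Finset ℕ := J.image (· - 1) ∪ J.image (· + 1) with hK
  have hm1J : P0.length - 1 ∈ J := by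
    refine Finset.mem_filter.2 ⟨Finset.mem_range.2 (by omega), ?_⟩
    refine ⟨P0[P0.length - 1]'(by omega), List.getElem?_eq_some_iff.2 ⟨by omega, rfl⟩, ?_⟩
    refine ⟨P0, Rot.base, ?_⟩
    rw [List.getLast?_eq_getElem?]
    exact List.getElem?_eq_some_iff.2 ⟨by omega, rfl⟩
  have hmK : P0.length ∈ K := by
    refine Finset.mem_union_right _ (Finset.mem_image.2 ⟨P0.length - 1, hm1J, by omega⟩)
  have hsub : (Set.toFinite (nbr G R)).toFinset ⊆ (K.erase P0.length).image f := by
    intro u hu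
    have hu' : u ∈ nbr G R := (Set.Finite.mem_toFinset _).1 hu
    obtain ⟨i, j, ⟨r, hir, hrR⟩, hju, hrel⟩ := posa_claim hc hn hlen hu'
    have hilt : i < P0.length := (List.getElem?_eq_some_iff.1 hir).1
    have hjlt : j < P0.length := (List.getElem?_eq_some_iff.1 hju).1
    have hiJ : i ∈ J := Finset.mem_filter.2 ⟨Finset.mem_range.2 hilt, r, hir, hrR⟩
    have hjK : j ∈ K := by
      rcases hrel with h | h
      · exact Finset.mem_union_left _ (Finset.mem_image.2 ⟨i, hiJ, by omega⟩)
      · exact Finset.mem_union_right _ (Finset.mem_image.2 ⟨i, hiJ, by omega⟩)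
    refine Finset.mem_image.2 ⟨j, Finset.mem_erase.2 ⟨by omega, hjK⟩, ?_⟩
    rw [hf]
    simp only [List.getD_eq_getElem?_getD, hju, Option.getD_some]
  have hc1 : (nbr G R).ncard ≤ (K.erase P0.length).card := by
    calc (nbr G R).ncard = (Set.toFinite (nbr G R)).toFinset.card :=
          Set.ncard_eq_toFinset_card _ _
      _ ≤ ((K.erase P0.length).image f).card := Finset.card_le_card hsub
      _ ≤ (K.erase P0.length).card := Finset.card_image_le
  have hc2 : (K.erase P0.length).card = K.card - 1 := Finset.card_erase_of_mem hmK
  have hc3 : 1 ≤ K.card := Finset.card_pos.2 ⟨_, hmK⟩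
  have hc4 : K.card ≤ 2 * J.card := by
    calc K.card ≤ (J.image (· - 1)).card + (J.image (· + 1)).card := Finset.card_union_le _ _
      _ ≤ J.card + J.card := Nat.add_le_add Finset.card_image_le Finset.card_image_le
      _ = 2 * J.card := by omega
  omega

lemma posa {β : ℝ}
    (hexp : ∀ A : Set V, (A.ncard : ℝ) < β * Fintype.card V →
      2 * A.ncard ≤ (nbr G A).ncard)
    (hc : P0.Chain' G.Adj) (hn : P0.Nodup) (hlen : P0.length = sTwo G + 1) :
    β * Fintype.card V ≤ ((RotE G P0).ncard : ℝ) := by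
  by_contra hcon
  push_neg at hcon
  have h2 := hexp _ hcon
  have h3 := posa_count hc hn hlen
  omega

end L19

/-- **Lemma 19 (many endpoint pairs).**  If `G` is a `2`-fold expander
(`|N_G(A)| ≥ 2|A|` for all `|A| < βn`) with `s_2(G) < n`, realised by a path, then some
vertex set `U` has `|EP₂(U)| ≥ (βn)²`. -/
theorem lemma_EP2 (V : Type*) [Fintype V] (G : SimpleGraph V) (β : ℝ)
    (hβ : 0 < β) (hβ1 : β ≤ 1)
    (hexp : ∀ A : Set V, (A.ncard : ℝ) < β * Fintype.card V →
      2 * A.ncard ≤ (nbr G A).ncard)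
    (hs : sTwo G < Fintype.card V)
    (hpath : ∃ (x y : V) (w : G.Walk x y), w.IsPath ∧ w.length = sTwo G) :
    ∃ U : Set V, (β * Fintype.card V) ^ 2 ≤ ((EP2 G U).ncard : ℝ) := by
  classical
  obtain ⟨x0, y0, w0, hw0, hlen0⟩ := hpath
  set P0 := w0.support with hP0
  have hc : P0.Chain' G.Adj := w0.isChain_adj_support
  have hn : P0.Nodup := hw0.support_nodup
  have hlen : P0.length = sTwo G + 1 := by
    rw [hP0, SimpleGraph.Walk.length_support, hlen0]
  refine ⟨{v | v ∈ P0}, ?_⟩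
  have hpos : (0:ℝ) ≤ β * Fintype.card V := by positivity
  have posa' : ∀ (P : List V), P.Chain' G.Adj → P.Nodup → P.length = sTwo G + 1 →
      β * Fintype.card V ≤ ((L19.RotE G P).ncard : ℝ) :=
    fun P hcP hnP hlP => L19.posa hexp hcP hnP hlP
  set T2 : V → Set V := fun b => {a' | ∃ l, L19.Rot G P0 l ∧ l.getLast? = some b ∧
    ∃ l', L19.Rot G l.reverse l' ∧ l'.getLast? = some a'} with hT2def
  have hrev : ∀ {l : List V}, L19.Rot G P0 l →
      (l.reverse.Chain' G.Adj ∧ l.reverse.Nodup ∧ l.reverse.length = sTwo G + 1) := by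
    intro l hl
    refine ⟨?_, ?_, ?_⟩
    · exact List.isChain_reverse.2 ((show List.IsChain _ _ from L19.rot_chain hc hl).imp fun a b hab => hab.symm)
    · exact List.nodup_reverse.2 (L19.rot_nodup hn hl)
    · rw [List.length_reverse, L19.rot_length hl, hlen]
  have hT2 : ∀ b ∈ L19.RotE G P0, β * Fintype.card V ≤ ((T2 b).ncard : ℝ) := by
    rintro b ⟨l, hl, hlast⟩
    obtain ⟨rc, rn, rl⟩ := hrev hl
    have h1 := posa' l.reverse rc rn rl
    have hsub : L19.RotE G l.reverse ⊆ T2 b := by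
      rintro a' ⟨l', hl', ha'⟩
      exact ⟨l, hl, hlast, l', hl', ha'⟩
    have h2 := Set.ncard_le_ncard hsub (Set.toFinite _)
    calc β * Fintype.card V ≤ ((L19.RotE G l.reverse).ncard : ℝ) := h1
      _ ≤ ((T2 b).ncard : ℝ) := by exact_mod_cast h2
  set F1 : Finset V := (Set.toFinite (L19.RotE G P0)).toFinset with hF1
  set F : Finset (V × V) := F1.biUnion
    (fun b => ((Set.toFinite (T2 b)).toFinset).image (fun a' => (b, a'))) with hF
  have hdisj : ∀ b ∈ F1, ∀ b' ∈ F1, b ≠ b' →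
      Disjoint (((Set.toFinite (T2 b)).toFinset).image (fun a' => (b, a')))
        (((Set.toFinite (T2 b')).toFinset).image (fun a' => (b', a'))) := by
    intro b _ b' _ hbb
    rw [Finset.disjoint_left]
    rintro q hq hq'
    obtain ⟨a, _, rfl⟩ := Finset.mem_image.1 hq
    obtain ⟨a', _, he⟩ := Finset.mem_image.1 hq'
    exact hbb (congrArg Prod.fst he).symm
  have hcardF : F.card = ∑ b ∈ F1, (T2 b).ncard := by
    rw [hF, Finset.card_biUnion hdisj]
    refine Finset.sum_congr rfl fun b _ => ?_
    rw [Finset.card_image_of_injective _ (fun x y h => by simpa using congrArg Prod.snd h)]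
    exact (Set.ncard_eq_toFinset_card _ _).symm
  have hsubEP : ↑F ⊆ EP2 G {v | v ∈ P0} := by
    intro q hq
    rw [Finset.mem_coe, hF, Finset.mem_biUnion] at hq
    obtain ⟨b, hb, hq⟩ := hq
    obtain ⟨a', ha', rfl⟩ := Finset.mem_image.1 hq
    obtain ⟨l, hl, hlb, l', hl', ha''⟩ := (Set.Finite.mem_toFinset _).1 ha'
    obtain ⟨rc, rn, rl⟩ := hrev hl
    have c' := L19.rot_chain rc hl'
    have n' := L19.rot_nodup rn hl'
    have hlen' : l'.length = sTwo G + 1 := (L19.rot_length hl').trans rl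
    have hhead : l'.head? = some b := by
      rw [L19.rot_head hl', List.head?_reverse]; exact hlb
    obtain ⟨w, hw⟩ := L19.exists_walk l' c' hhead ha''
    refine ⟨w, ?_, ?_, ?_⟩
    · rwa [SimpleGraph.Walk.isPath_def, hw]
    · have hls := w.length_support
      rw [hw, hlen'] at hls
      omega
    · ext v
      simp only [Set.mem_setOf_eq, hw]
      rw [L19.rot_mem hl' v, List.mem_reverse, L19.rot_mem hl v]
  have h1 : β * Fintype.card V ≤ ((L19.RotE G P0).ncard : ℝ) := posa' P0 hc hn hlen
  have hcardR : ((L19.RotE G P0).ncard : ℝ) = F1.card := by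
    rw [Set.ncard_eq_toFinset_card _ (Set.toFinite _)]
  calc (β * Fintype.card V)^2 = (β * Fintype.card V) * (β * Fintype.card V) := sq _
    _ ≤ ((L19.RotE G P0).ncard : ℝ) * (β * Fintype.card V) :=
        mul_le_mul_of_nonneg_right h1 hpos
    _ = ∑ _b ∈ F1, β * Fintype.card V := by
        rw [Finset.sum_const, hcardR, nsmul_eq_mul]
    _ ≤ ∑ b ∈ F1, ((T2 b).ncard : ℝ) :=
        Finset.sum_le_sum fun b hb => hT2 b ((Set.Finite.mem_toFinset _).1 hb)
    _ = (F.card : ℝ) := by rw [hcardF]; push_cast; rfl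
    _ ≤ ((EP2 G {v | v ∈ P0}).ncard : ℝ) := by
        have h := Set.ncard_le_ncard hsubEP (Set.toFinite _)
        rw [Set.ncard_coe_finset] at h
        exact_mod_cast h
end
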